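/- arXiv:2202.01590 — 11 statements merged into one kernel-verified Lean document; each statement's English description precedes it below -/
import Mathlib

section
/- For every t ∈ (0, t₀), every λ ∈ [0,1] and every x ∈ Ω'', the closed ball B̄(x, √(C*·t)) is contained in Ω', the infimum defining f_t(x,λ) is attained (i.e. S_t(x,λ) ≠ ∅), and moreover f_t(x,λ) = min over y ∈ B̄(x, √(C*·t)) of { e^{−2Kλ}·d(x,y)²/(2t) − d_Y(u(x),u(y)) }. -/
open Metric Filter Set Topology

/-- The Hopf–Lax-type function `f_t(x,λ) = inf_{y ∈ Ω'} { e^{-2Kλ} d(x,y)²/(2t) - d_Y(u(x),u(y)) }`. -/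
noncomputable def fT {X Y : Type*} [MetricSpace X] [MetricSpace Y]
    (Ω' : Set X) (u : X → Y) (K t lam : ℝ) (x : X) : ℝ :=
  ⨅ y : Ω', (Real.exp (-2 * K * lam) * dist x (y : X) ^ 2 / (2 * t) - dist (u x) (u (y : X)))

/-- The set `S_t(x,λ)` of points of `Ω'` attaining the infimum defining `f_t(x,λ)`. -/
noncomputable def minSet {X Y : Type*} [MetricSpace X] [MetricSpace Y]
    (Ω' : Set X) (u : X → Y) (K t lam : ℝ) (x : X) : Set X :=
  {y ∈ Ω' | fT Ω' u K t lam x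
    = Real.exp (-2 * K * lam) * dist x y ^ 2 / (2 * t) - dist (u x) (u y)}

theorem stmt0 {X Y : Type*} [MetricSpace X] [ProperSpace X] [MetricSpace Y]
    (Ω' Ω'' : Set X) (hΩ'open : IsOpen Ω') (hΩ'bdd : Bornology.IsBounded Ω')
    (hΩ'ne : Ω'.Nonempty) (hΩ''open : IsOpen Ω'') (hΩ''ne : Ω''.Nonempty)
    (hsub : Ω'' ⊆ Ω')
    (u : X → Y) (hu : ContinuousOn u Ω')
    (osc : ℝ)
    (hoscBdd : BddAbove ((fun p : X × X => dist (u p.1) (u p.2)) '' (Ω' ×ˢ Ω')))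
    (hosc : osc = sSup ((fun p : X × X => dist (u p.1) (u p.2)) '' (Ω' ×ˢ Ω')))
    (K : ℝ) (hK : K ≤ 0)
    (D : ℝ) (hD : D = sInf ((fun p : X × X => dist p.1 p.2) '' (Ω'' ×ˢ Ω'ᶜ)))
    (hDpos : 0 < D)
    (Cstar t₀ : ℝ) (hC : Cstar = 2 * osc + 2) (ht₀ : t₀ = D ^ 2 / (4 * Cstar)) :
    ∀ t ∈ Ioo (0 : ℝ) t₀, ∀ lam ∈ Icc (0 : ℝ) 1, ∀ x ∈ Ω'',
      closedBall x (Real.sqrt (Cstar * t)) ⊆ Ω' ∧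
      (minSet Ω' u K t lam x).Nonempty ∧
      ∃ y ∈ closedBall x (Real.sqrt (Cstar * t)),
        (∀ z ∈ closedBall x (Real.sqrt (Cstar * t)),
          Real.exp (-2 * K * lam) * dist x y ^ 2 / (2 * t) - dist (u x) (u y)
            ≤ Real.exp (-2 * K * lam) * dist x z ^ 2 / (2 * t) - dist (u x) (u z)) ∧
        fT Ω' u K t lam x
          = Real.exp (-2 * K * lam) * dist x y ^ 2 / (2 * t) - dist (u x) (u y) := by
  intro t ht lam hlam x hx
  obtain ⟨ht0, htlt⟩ := ht
  have hxΩ' : x ∈ Ω' := hsub hx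
  haveI : Nonempty Ω' := ⟨⟨x, hxΩ'⟩⟩
  have hoscle : ∀ a ∈ Ω', ∀ b ∈ Ω', dist (u a) (u b) ≤ osc := by
    intro a ha b hb
    rw [hosc]
    exact le_csSup hoscBdd ⟨(a, b), ⟨ha, hb⟩, rfl⟩
  have hosc0 : 0 ≤ osc := by simpa using hoscle x hxΩ' x hxΩ'
  have hCpos : 0 < Cstar := by rw [hC]; linarith
  set r := Real.sqrt (Cstar * t) with hr
  have hr0 : 0 ≤ r := Real.sqrt_nonneg _
  have hr2 : r ^ 2 = Cstar * t := Real.sq_sqrt (mul_nonneg hCpos.le ht0.le)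
  have hr2D : r ^ 2 < D ^ 2 := by
    rw [hr2]
    have h := mul_lt_mul_of_pos_left htlt hCpos
    rw [ht₀] at h
    have h2 : Cstar * (D ^ 2 / (4 * Cstar)) = D ^ 2 / 4 := by
      field_simp
    nlinarith [sq_nonneg D]
  have hrD : r < D := by nlinarith
  have hDle : ∀ z, z ∉ Ω' → D ≤ dist x z := by
    intro z hz
    rw [hD]
    apply csInf_le
    · exact ⟨0, by rintro v ⟨p, _, rfl⟩; exact dist_nonneg⟩
    · exact ⟨(x, z), ⟨hx, hz⟩, rfl⟩
  have hball : closedBall x r ⊆ Ω' := by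
    intro z hz
    by_contra hzΩ
    have h1 := hDle z hzΩ
    rw [mem_closedBall, dist_comm] at hz
    linarith
  have he0 : (0:ℝ) < Real.exp (-2 * K * lam) := Real.exp_pos _
  have he1 : (1:ℝ) ≤ Real.exp (-2 * K * lam) :=
    Real.one_le_exp (by nlinarith [hlam.1])
  have ht2 : (0:ℝ) < 2 * t := by linarith
  let g : X → ℝ := fun y =>
    Real.exp (-2 * K * lam) * dist x y ^ 2 / (2 * t) - dist (u x) (u y)
  have hgc : ContinuousOn g (closedBall x r) := by
    apply ContinuousOn.sub
    · exact ((continuous_const.mul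
        ((continuous_const.dist continuous_id).pow 2)).div_const _).continuousOn
    · exact (continuous_const.dist continuous_id).comp_continuousOn (hu.mono hball)
  obtain ⟨y₀, hy₀mem, hy₀min⟩ :=
    (isCompact_closedBall x r).exists_isMinOn ⟨x, mem_closedBall_self hr0⟩ hgc
  have hy₀min' : ∀ z ∈ closedBall x r, g y₀ ≤ g z := fun z hz =>
    isMinOn_iff.mp hy₀min z hz
  have hgx : g x = 0 := by simp [g]
  have hy₀0 : g y₀ ≤ 0 := hgx ▸ hy₀min' x (mem_closedBall_self hr0)
  have hterm : ∀ y : X, 0 ≤ Real.exp (-2 * K * lam) * dist x y ^ 2 / (2 * t) :=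
    fun y => div_nonneg (mul_nonneg he0.le (sq_nonneg _)) ht2.le
  have hout : ∀ y ∈ Ω', y ∉ closedBall x r → 0 < g y := by
    intro y hy hyb
    have hd : r < dist x y := by
      rw [mem_closedBall, not_le, dist_comm] at hyb
      exact hyb
    have hd2 : Cstar * t < dist x y ^ 2 := by nlinarith
    have h3 : osc + 1 < dist x y ^ 2 / (2 * t) := by
      rw [lt_div_iff₀ ht2]
      nlinarith
    have h4 : dist (u x) (u y) ≤ osc := hoscle x hxΩ' y hy
    have h5 : dist x y ^ 2 / (2 * t)
        ≤ Real.exp (-2 * K * lam) * dist x y ^ 2 / (2 * t) :=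
      (div_le_div_iff_of_pos_right ht2).mpr (le_mul_of_one_le_left (sq_nonneg _) he1)
    show (0:ℝ) < Real.exp (-2 * K * lam) * dist x y ^ 2 / (2 * t)
      - dist (u x) (u y)
    linarith
  have hkey : ∀ y ∈ Ω', g y₀ ≤ g y := by
    intro y hy
    by_cases hyb : y ∈ closedBall x r
    · exact hy₀min' y hyb
    · exact le_trans hy₀0 (hout y hy hyb).le
  have hbdd : BddBelow (Set.range fun y : Ω' =>
      Real.exp (-2 * K * lam) * dist x (y : X) ^ 2 / (2 * t)
        - dist (u x) (u (y : X))) := by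
    refine ⟨-osc, ?_⟩
    rintro v ⟨⟨y, hy⟩, rfl⟩
    have h1 := hoscle x hxΩ' y hy
    have h2 := hterm y
    simp only
    linarith
  have hfT : fT Ω' u K t lam x = g y₀ := by
    apply le_antisymm
    · exact ciInf_le hbdd ⟨y₀, hball hy₀mem⟩
    · exact le_ciInf fun y => hkey y y.2
  exact ⟨hball, ⟨y₀, hball hy₀mem, hfT⟩, y₀, hy₀mem,
    fun z hz => hy₀min' z hz, hfT⟩
end

section
/- For every fixed t ∈ (0, t₀), the function (x,λ) ↦ f_t(x,λ) is continuous on Ω'' × [0,1]. -/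
open Metric Filter Set Topology

/-- `L_{t,λ}(x) := min { d(x,y) : y ∈ S_t(x,λ) }` (as an infimum, which is attained). -/
noncomputable def minDist {X Y : Type*} [MetricSpace X] [MetricSpace Y]
    (Ω' : Set X) (u : X → Y) (K t lam : ℝ) (x : X) : ℝ :=
  sInf ((fun y => dist x y) '' minSet Ω' u K t lam x)

theorem stmt1 {X Y : Type*} [MetricSpace X] [ProperSpace X] [MetricSpace Y]
    (Ω' Ω'' : Set X) (hΩ'open : IsOpen Ω') (hΩ'bdd : Bornology.IsBounded Ω')
    (hΩ'ne : Ω'.Nonempty) (hΩ''open : IsOpen Ω'') (hΩ''ne : Ω''.Nonempty)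
    (hsub : Ω'' ⊆ Ω')
    (u : X → Y) (hu : ContinuousOn u Ω')
    (osc : ℝ)
    (hoscBdd : BddAbove ((fun p : X × X => dist (u p.1) (u p.2)) '' (Ω' ×ˢ Ω')))
    (hosc : osc = sSup ((fun p : X × X => dist (u p.1) (u p.2)) '' (Ω' ×ˢ Ω')))
    (K : ℝ) (hK : K ≤ 0)
    (D : ℝ) (hD : D = sInf ((fun p : X × X => dist p.1 p.2) '' (Ω'' ×ˢ Ω'ᶜ)))
    (hDpos : 0 < D)
    (Cstar t₀ : ℝ) (hC : Cstar = 2 * osc + 2) (ht₀ : t₀ = D ^ 2 / (4 * Cstar)) :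
    ∀ t ∈ Ioo (0 : ℝ) t₀,
      ContinuousOn (fun p : X × ℝ => fT Ω' u K t p.2 p.1) (Ω'' ×ˢ Icc (0 : ℝ) 1) := by
  intro t ht
  have ht0 : 0 < t := ht.1
  haveI : Nonempty Ω' := hΩ'ne.to_subtype
  obtain ⟨M, hM⟩ := Metric.isBounded_iff.mp hΩ'bdd
  obtain ⟨z₀, hz₀⟩ := hΩ'ne
  have hM0 : 0 ≤ M := le_trans dist_nonneg (hM hz₀ hz₀)
  have hbdd : ∀ (lam : ℝ), ∀ x ∈ Ω', BddBelow (Set.range fun y : Ω' =>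
      Real.exp (-2 * K * lam) * dist x (y : X) ^ 2 / (2 * t) - dist (u x) (u (y : X))) := by
    intro lam x hx
    refine ⟨-osc, ?_⟩
    rintro _ ⟨y, rfl⟩
    have h1 : dist (u x) (u (y : X)) ≤ osc := by
      rw [hosc]
      exact le_csSup hoscBdd ⟨(x, (y : X)), ⟨hx, y.2⟩, rfl⟩
    have h2 : 0 ≤ Real.exp (-2 * K * lam) * dist x (y : X) ^ 2 / (2 * t) := by positivity
    linarith
  have key : ∀ x ∈ Ω', ∀ x' ∈ Ω', ∀ lam lam' : ℝ, lam ∈ Icc (0:ℝ) 1 → lam' ∈ Icc (0:ℝ) 1 →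
      fT Ω' u K t lam x ≤ fT Ω' u K t lam' x' +
        ((|Real.exp (-2 * K * lam) - Real.exp (-2 * K * lam')| * M ^ 2
          + Real.exp (-2 * K) * (2 * M) * dist x x') / (2 * t) + dist (u x) (u x')) := by
    intro x hx x' hx' lam lam' hlam hlam'
    rw [fT, fT, ← sub_le_iff_le_add]
    refine le_ciInf fun y => ?_
    rw [sub_le_iff_le_add]
    have hle : fT Ω' u K t lam x ≤
        Real.exp (-2 * K * lam) * dist x (y : X) ^ 2 / (2 * t) - dist (u x) (u (y : X)) :=
      ciInf_le (hbdd lam x hx) y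
    refine le_trans hle ?_
    set a := dist x (y : X) with ha_def
    set b := dist x' (y : X) with hb_def
    set ea := Real.exp (-2 * K * lam) with hea_def
    set eb := Real.exp (-2 * K * lam') with heb_def
    set eK := Real.exp (-2 * K) with heK_def
    have ha : a ≤ M := hM hx y.2
    have hb : b ≤ M := hM hx' y.2
    have ha0 : 0 ≤ a := dist_nonneg
    have hb0 : 0 ≤ b := dist_nonneg
    have hab : a ≤ b + dist x x' := by
      have := dist_triangle x x' (y : X)
      rw [← ha_def, ← hb_def] at this; linarith
    have hxx0 : 0 ≤ dist x x' := dist_nonneg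
    have hea0 : 0 < ea := Real.exp_pos _
    have heb0 : 0 < eb := Real.exp_pos _
    have heK0 : 0 < eK := Real.exp_pos _
    have hebK : eb ≤ eK := by
      apply Real.exp_le_exp.mpr
      have h1 := hlam'.1
      have h2 := hlam'.2
      nlinarith
    have habs : ea - eb ≤ |ea - eb| := le_abs_self _
    have habs0 : 0 ≤ |ea - eb| := abs_nonneg _
    have hd : dist (u x') (u (y : X)) - dist (u x) (u (y : X)) ≤ dist (u x) (u x') := by
      have := abs_dist_sub_le (u x') (u x) (u (y : X))
      rw [dist_comm (u x') (u x)] at this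
      have h2 := le_abs_self (dist (u x') (u (y:X)) - dist (u x) (u (y:X)))
      linarith
    have h3 : a ^ 2 - b ^ 2 ≤ 2 * M * dist x x' := by
      have hsum : a + b ≤ 2 * M := by linarith
      have hdiff : a - b ≤ dist x x' := by linarith
      have hfac : a ^ 2 - b ^ 2 = (a + b) * (a - b) := by ring
      rcases le_total (a - b) 0 with h | h
      · have h5 : (a + b) * (a - b) ≤ 0 := mul_nonpos_of_nonneg_of_nonpos (by linarith) h
        have h6 : 0 ≤ 2 * M * dist x x' := by positivity
        linarith
      · have h5 : (a + b) * (a - b) ≤ (2 * M) * dist x x' :=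
          mul_le_mul hsum hdiff h (by linarith)
        linarith
    have h2 : eb * (a ^ 2 - b ^ 2) ≤ eK * (2 * M * dist x x') := by
      rcases le_total (a ^ 2 - b ^ 2) 0 with h | h
      · have hl : eb * (a ^ 2 - b ^ 2) ≤ 0 := mul_nonpos_of_nonneg_of_nonpos heb0.le h
        have hr : 0 ≤ eK * (2 * M * dist x x') := by positivity
        linarith
      · calc eb * (a ^ 2 - b ^ 2) ≤ eK * (a ^ 2 - b ^ 2) :=
              mul_le_mul_of_nonneg_right hebK h
          _ ≤ eK * (2 * M * dist x x') := mul_le_mul_of_nonneg_left h3 heK0.le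
    have haM : a ^ 2 ≤ M ^ 2 := by
      have := mul_le_mul ha ha ha0 hM0
      nlinarith
    have h1 : (ea - eb) * a ^ 2 ≤ |ea - eb| * M ^ 2 :=
      mul_le_mul habs haM (sq_nonneg a) habs0
    have hnum : ea * a ^ 2 ≤ eb * b ^ 2 + (|ea - eb| * M ^ 2 + eK * (2 * M) * dist x x') := by
      have hid : ea * a ^ 2 - eb * b ^ 2 = (ea - eb) * a ^ 2 + eb * (a ^ 2 - b ^ 2) := by ring
      have heq : eK * (2 * M * dist x x') = eK * (2 * M) * dist x x' := by ring
      linarith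
    have hfin : ea * a ^ 2 / (2 * t) ≤
        eb * b ^ 2 / (2 * t) + (|ea - eb| * M ^ 2 + eK * (2 * M) * dist x x') / (2 * t) := by
      rw [← add_div]
      gcongr
    linarith
  intro p hp
  have hpx : p.1 ∈ Ω'' := hp.1
  have hpl : p.2 ∈ Icc (0:ℝ) 1 := hp.2
  rw [ContinuousWithinAt, tendsto_iff_dist_tendsto_zero]
  set s := Ω'' ×ˢ Icc (0:ℝ) 1 with hs_def
  set E : X × ℝ → ℝ := fun q =>
    (|Real.exp (-2 * K * q.2) - Real.exp (-2 * K * p.2)| * M ^ 2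
      + Real.exp (-2 * K) * (2 * M) * dist q.1 p.1) / (2 * t) + dist (u q.1) (u p.1) with hE_def
  apply squeeze_zero' (g := E) (Eventually.of_forall fun q => dist_nonneg)
  · filter_upwards [self_mem_nhdsWithin] with q hq
    have hqx : q.1 ∈ Ω'' := hq.1
    have hql : q.2 ∈ Icc (0:ℝ) 1 := hq.2
    rw [Real.dist_eq, abs_sub_le_iff]
    constructor
    · have := key q.1 (hsub hqx) p.1 (hsub hpx) q.2 p.2 hql hpl
      simp only [hE_def]; linarith
    · have := key p.1 (hsub hpx) q.1 (hsub hqx) p.2 q.2 hpl hql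
      rw [abs_sub_comm, dist_comm p.1 q.1, dist_comm (u p.1) (u q.1)] at this
      simp only [hE_def]; linarith
  · have hx1 : Tendsto (fun q : X × ℝ => q.1) (𝓝[s] p) (𝓝 p.1) :=
      (continuous_fst.tendsto p).mono_left nhdsWithin_le_nhds
    have hl1 : Tendsto (fun q : X × ℝ => q.2) (𝓝[s] p) (𝓝 p.2) :=
      (continuous_snd.tendsto p).mono_left nhdsWithin_le_nhds
    have hxin : Tendsto (fun q : X × ℝ => q.1) (𝓝[s] p) (𝓝[Ω'] p.1) := by
      apply tendsto_nhdsWithin_of_tendsto_nhds_of_eventually_within _ hx1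
      filter_upwards [self_mem_nhdsWithin] with q hq
      exact hsub hq.1
    have hu0 : Tendsto (fun q : X × ℝ => u q.1) (𝓝[s] p) (𝓝 (u p.1)) :=
      Filter.Tendsto.comp (hu p.1 (hsub hpx)) hxin
    have h1 : Tendsto (fun q : X × ℝ =>
        |Real.exp (-2 * K * q.2) - Real.exp (-2 * K * p.2)|) (𝓝[s] p) (𝓝 0) := by
      have hc : Continuous fun l : ℝ => |Real.exp (-2 * K * l) - Real.exp (-2 * K * p.2)| := by
        fun_prop
      have := (hc.tendsto p.2).comp hl1
      simpa [Function.comp_def] using this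
    have h2 : Tendsto (fun q : X × ℝ => dist q.1 p.1) (𝓝[s] p) (𝓝 0) := by
      have := hx1.dist (tendsto_const_nhds (x := p.1))
      simpa using this
    have h3 : Tendsto (fun q : X × ℝ => dist (u q.1) (u p.1)) (𝓝[s] p) (𝓝 0) := by
      have := hu0.dist (tendsto_const_nhds (x := u p.1))
      simpa using this
    have hE : Tendsto E (𝓝[s] p) (𝓝 (((0 : ℝ) * M ^ 2
        + Real.exp (-2 * K) * (2 * M) * 0) / (2 * t) + 0)) := by
      exact (((h1.mul_const (M ^ 2)).add (h2.const_mul _)).div_const (2 * t)).add h3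
    simpa using hE
end

section
/- For every fixed t ∈ (0, t₀), the function (x,λ) ↦ L_{t,λ}(x) is lower semicontinuous on Ω'' × [0,1]. -/
open Metric Filter Set Topology

/-- The integrand of the Hopf–Lax infimum. -/
noncomputable def FF {X Y : Type*} [MetricSpace X] [MetricSpace Y]
    (u : X → Y) (K t lam : ℝ) (x y : X) : ℝ :=
  Real.exp (-2 * K * lam) * dist x y ^ 2 / (2 * t) - dist (u x) (u y)

set_option maxHeartbeats 2000000 in
theorem stmt2 {X Y : Type*} [MetricSpace X] [ProperSpace X] [MetricSpace Y]
    (Ω' Ω'' : Set X) (hΩ'open : IsOpen Ω') (hΩ'bdd : Bornology.IsBounded Ω')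
    (hΩ'ne : Ω'.Nonempty) (hΩ''open : IsOpen Ω'') (hΩ''ne : Ω''.Nonempty)
    (hsub : Ω'' ⊆ Ω')
    (u : X → Y) (hu : ContinuousOn u Ω')
    (osc : ℝ)
    (hoscBdd : BddAbove ((fun p : X × X => dist (u p.1) (u p.2)) '' (Ω' ×ˢ Ω')))
    (hosc : osc = sSup ((fun p : X × X => dist (u p.1) (u p.2)) '' (Ω' ×ˢ Ω')))
    (K : ℝ) (hK : K ≤ 0)
    (D : ℝ) (hD : D = sInf ((fun p : X × X => dist p.1 p.2) '' (Ω'' ×ˢ Ω'ᶜ)))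
    (hDpos : 0 < D)
    (Cstar t₀ : ℝ) (hC : Cstar = 2 * osc + 2) (ht₀ : t₀ = D ^ 2 / (4 * Cstar)) :
    ∀ t ∈ Ioo (0 : ℝ) t₀,
      LowerSemicontinuousOn (fun p : X × ℝ => minDist Ω' u K t p.2 p.1)
        (Ω'' ×ˢ Icc (0 : ℝ) 1) := by
  intro t ht
  obtain ⟨ht0, htt0⟩ := ht
  haveI : Nonempty Ω' := hΩ'ne.to_subtype
  -- osc is nonnegative
  have hosc0 : 0 ≤ osc := by
    obtain ⟨a, ha⟩ := hΩ'ne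
    have h := le_csSup hoscBdd (⟨(a, a), Set.mk_mem_prod ha ha, rfl⟩ :
      dist (u a) (u a) ∈ (fun p : X × X => dist (u p.1) (u p.2)) '' (Ω' ×ˢ Ω'))
    rw [hosc]; simpa using h
  have hdu : ∀ {a b : X}, a ∈ Ω' → b ∈ Ω' → dist (u a) (u b) ≤ osc := by
    intro a b ha hb
    rw [hosc]
    exact le_csSup hoscBdd ⟨(a, b), Set.mk_mem_prod ha hb, rfl⟩
  have hC2 : 2 ≤ Cstar := by rw [hC]; linarith
  have hCpos : 0 < Cstar := by linarith
  have htC : t * Cstar < D ^ 2 / 4 := by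
    have h1 : t * Cstar < t₀ * Cstar := mul_lt_mul_of_pos_right htt0 hCpos
    have h2 : t₀ * Cstar = D ^ 2 / 4 := by
      rw [ht₀]; field_simp
    linarith
  have h2t : (0:ℝ) < 2 * t := by linarith
  -- boundedness below of the integrand
  have hFbdd : ∀ x ∈ Ω', ∀ lam : ℝ, BddBelow (Set.range fun y : Ω' => FF u K t lam x (y : X)) := by
    intro x hx lam
    refine ⟨-osc, ?_⟩
    rintro v ⟨y, rfl⟩
    have h1 : dist (u x) (u (y : X)) ≤ osc := hdu hx y.2
    have h2 : 0 ≤ Real.exp (-2 * K * lam) * dist x (y : X) ^ 2 / (2 * t) := by positivity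
    simp only [FF]; linarith
  have hfT_eq : ∀ (lam : ℝ) (x : X),
      fT Ω' u K t lam x = ⨅ y : Ω', FF u K t lam x (y : X) := fun _ _ => rfl
  have hfT_le : ∀ x ∈ Ω', ∀ lam : ℝ, ∀ y ∈ Ω',
      fT Ω' u K t lam x ≤ FF u K t lam x y := by
    intro x hx lam y hy
    rw [hfT_eq]
    exact ciInf_le (hFbdd x hx lam) ⟨y, hy⟩
  have hfT_nonpos : ∀ x ∈ Ω', ∀ lam : ℝ, fT Ω' u K t lam x ≤ 0 := by
    intro x hx lam
    have h := hfT_le x hx lam x hx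
    simpa [FF] using h
  have hballsub : ∀ x ∈ Ω'', ∀ ρ : ℝ, ρ < D → closedBall x ρ ⊆ Ω' := by
    intro x hx ρ hρ z hz
    by_contra hzΩ
    have h1 : D ≤ dist x z := by
      rw [hD]
      exact csInf_le ⟨0, by rintro v ⟨p, _, rfl⟩; exact dist_nonneg⟩
        ⟨(x, z), Set.mk_mem_prod hx hzΩ, rfl⟩
    have h2 : dist x z ≤ ρ := mem_closedBall'.mp hz
    linarith
  have hexp1 : ∀ lam ∈ Icc (0:ℝ) 1, 1 ≤ Real.exp (-2 * K * lam) := by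
    intro lam hlam
    exact Real.one_le_exp (by nlinarith [hlam.1])
  have contF : ∀ (x : X) (lam : ℝ), ContinuousOn (fun y => FF u K t lam x y) Ω' := by
    intro x lam
    simp only [FF]
    exact (((continuous_const.mul ((continuous_const.dist continuous_id).pow 2)).div_const
      _).continuousOn).sub ((continuous_const.dist continuous_id).comp_continuousOn hu)
  have hDhalf : 0 < D / 2 := by linarith
  -- minimizers are at distance < D/2
  have hmsd : ∀ x ∈ Ω'', ∀ lam ∈ Icc (0:ℝ) 1, ∀ y ∈ minSet Ω' u K t lam x,
      dist x y < D / 2 := by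
    intro x hx lam hlam y hy
    obtain ⟨hyΩ, heq⟩ := hy
    have hxΩ := hsub hx
    have h0 : fT Ω' u K t lam x ≤ 0 := hfT_nonpos x hxΩ lam
    have hexp : 1 ≤ Real.exp (-2 * K * lam) := hexp1 lam hlam
    have hduy : dist (u x) (u y) ≤ osc := hdu hxΩ hyΩ
    rw [heq] at h0
    have h0' : Real.exp (-2 * K * lam) * dist x y ^ 2 ≤ dist (u x) (u y) * (2 * t) := by
      rw [← div_le_iff₀ h2t]; linarith
    have hd2 : dist x y ^ 2 ≤ 2 * t * osc := by
      have ha : dist x y ^ 2 ≤ Real.exp (-2 * K * lam) * dist x y ^ 2 :=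
        le_mul_of_one_le_left (sq_nonneg _) hexp
      have hb : dist (u x) (u y) * (2 * t) ≤ osc * (2 * t) :=
        mul_le_mul_of_nonneg_right hduy (by linarith)
      linarith
    have h34 : 2 * t * osc + 2 * t < D ^ 2 / 4 := by
      have hh : 2 * t * osc + 2 * t = t * Cstar := by rw [hC]; ring
      linarith [hh ▸ htC]
    have hlt : dist x y ^ 2 < (D / 2) ^ 2 := by
      have hq4 : (D / 2) ^ 2 = D ^ 2 / 4 := by ring
      rw [hq4]; linarith
    exact lt_of_pow_lt_pow_left₀ 2 hDhalf.le hlt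
  -- existence of minimizers
  have hex : ∀ x ∈ Ω'', ∀ lam ∈ Icc (0:ℝ) 1, ∃ y, y ∈ minSet Ω' u K t lam x := by
    intro x hx lam hlam
    have hxΩ := hsub hx
    have hball := hballsub x hx (D / 2) (by linarith)
    obtain ⟨y₀, hy₀b, hy₀min⟩ := (isCompact_closedBall x (D / 2)).exists_isMinOn
      ⟨x, mem_closedBall_self hDhalf.le⟩ ((contF x lam).mono hball)
    have hglobal : ∀ y ∈ Ω', FF u K t lam x y₀ ≤ FF u K t lam x y := by
      intro y hy
      rcases le_or_gt (dist x y) (D / 2) with h | h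
      · exact hy₀min (mem_closedBall'.mpr h)
      · have h0 : FF u K t lam x y₀ ≤ 0 := by
          have hh := hy₀min (mem_closedBall_self hDhalf.le)
          simpa [FF] using hh
        have hduy : dist (u x) (u y) ≤ osc := hdu hxΩ hy
        have hexp : 1 ≤ Real.exp (-2 * K * lam) := hexp1 lam hlam
        have hFnn : 0 ≤ FF u K t lam x y := by
          simp only [FF]
          have he1 : dist x y ^ 2 ≤ Real.exp (-2 * K * lam) * dist x y ^ 2 :=
            le_mul_of_one_le_left (sq_nonneg _) hexp
          have he2 : osc * (2 * t) ≤ dist x y ^ 2 := by nlinarith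
          rw [sub_nonneg, le_div_iff₀ h2t]
          nlinarith
        linarith
    refine ⟨y₀, hball hy₀b, ?_⟩
    have h1 : fT Ω' u K t lam x ≤ FF u K t lam x y₀ := hfT_le x hxΩ lam y₀ (hball hy₀b)
    have h2 : FF u K t lam x y₀ ≤ fT Ω' u K t lam x := by
      rw [hfT_eq]
      exact le_ciInf fun y => hglobal (y : X) y.2
    exact le_antisymm h1 h2
  have hmdnn : ∀ (lam : ℝ) (x : X), 0 ≤ minDist Ω' u K t lam x := by
    intro lam x
    apply Real.sInf_nonneg
    rintro v ⟨y, _, rfl⟩; exact dist_nonneg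
  have hmdle : ∀ (lam : ℝ) (x : X), ∀ y ∈ minSet Ω' u K t lam x,
      minDist Ω' u K t lam x ≤ dist x y := by
    intro lam x y hy
    exact csInf_le ⟨0, by rintro v ⟨z, _, rfl⟩; exact dist_nonneg⟩ (mem_image_of_mem _ hy)
  -- main argument
  rintro ⟨x, lam⟩ hp c hc
  obtain ⟨hx, hlam⟩ := Set.mem_prod.mp hp
  simp only at hc hx hlam
  rcases lt_or_ge c 0 with hcneg | hc0
  · exact Filter.Eventually.of_forall fun q => lt_of_lt_of_le hcneg (hmdnn _ _)
  -- c ≥ 0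
  obtain ⟨y₀, hy₀⟩ := hex x hx lam hlam
  have hy₀Ω : y₀ ∈ Ω' := hy₀.1
  have hy₀d : dist x y₀ < D / 2 := hmsd x hx lam hlam y₀ hy₀
  have hLle : minDist Ω' u K t lam x ≤ dist x y₀ := hmdle lam x y₀ hy₀
  set L := minDist Ω' u K t lam x with hLdef
  have hcL : c < L := hc
  set r := (c + L) / 2 with hrdef
  have hrc : c < r := by simp only [hrdef]; linarith
  have hrL : r < L := by simp only [hrdef]; linarith
  have hr0 : 0 < r := by linarith
  have hrD : r < D / 2 := by linarith
  have hballr := hballsub x hx r (by linarith)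
  obtain ⟨z₀, hz₀b, hz₀min⟩ := (isCompact_closedBall x r).exists_isMinOn
    ⟨x, mem_closedBall_self hr0.le⟩ ((contF x lam).mono hballr)
  set m := FF u K t lam x z₀ with hmdef
  have hfTm : fT Ω' u K t lam x < m := by
    have h1 : fT Ω' u K t lam x ≤ m := hfT_le x (hsub hx) lam z₀ (hballr hz₀b)
    rcases h1.lt_or_eq with h | h
    · exact h
    · exfalso
      have hz₀mem : z₀ ∈ minSet Ω' u K t lam x := ⟨hballr hz₀b, h⟩
      have hL2 := hmdle lam x z₀ hz₀mem
      have hdz : dist x z₀ ≤ r := mem_closedBall'.mp hz₀b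
      rw [← hLdef] at hL2
      linarith
  set δ := (m - fT Ω' u K t lam x) / 3 with hδdef
  have hδ0 : 0 < δ := by simp only [hδdef]; linarith
  set R := D / 2 + 1 with hRdef
  have hR1 : (1:ℝ) ≤ R := by simp only [hRdef]; linarith
  have hR0 : (0:ℝ) < R := by linarith
  set E := Real.exp (-2 * K) with hEdef
  have hexpE : ∀ μ ∈ Icc (0:ℝ) 1, Real.exp (-2 * K * μ) ≤ E := by
    intro μ hμ
    rw [hEdef]
    exact Real.exp_le_exp.mpr (by nlinarith [hμ.1, hμ.2])
  have hE0 : (0:ℝ) < E := Real.exp_pos _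
  set ε₁ := (δ * t) / (3 * E * R) with hε₁def
  have hε₁0 : 0 < ε₁ := by positivity
  set δ' := (2 * t * δ) / (3 * R ^ 2) with hδ'def
  have hδ'0 : 0 < δ' := by positivity
  have hcont : ContinuousAt (fun l : ℝ => Real.exp (-2 * K * l)) lam :=
    (Real.continuous_exp.comp (continuous_const.mul continuous_id)).continuousAt
  obtain ⟨ε₂, hε₂0, hε₂⟩ := Metric.continuousAt_iff.mp hcont δ' hδ'0
  obtain ⟨ε₃, hε₃0, hε₃⟩ := Metric.continuousWithinAt_iff.mp (hu x (hsub hx)) (δ / 3)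
    (by linarith)
  set ρ := min (min 1 ((r - c) / 2)) (min ε₁ (min ε₂ ε₃)) with hρdef
  have hρ0 : 0 < ρ := by
    simp only [hρdef, lt_min_iff]
    exact ⟨⟨one_pos, by linarith⟩, hε₁0, hε₂0, hε₃0⟩
  have hρ1 : ρ ≤ 1 := le_trans (min_le_left _ _) (min_le_left _ _)
  have hρrc : ρ ≤ (r - c) / 2 := le_trans (min_le_left _ _) (min_le_right _ _)
  have hρε₁ : ρ ≤ ε₁ := le_trans (min_le_right _ _) (min_le_left _ _)
  have hρε₂ : ρ ≤ ε₂ := le_trans (min_le_right _ _) (le_trans (min_le_right _ _) (min_le_left _ _))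
  have hρε₃ : ρ ≤ ε₃ := le_trans (min_le_right _ _) (le_trans (min_le_right _ _) (min_le_right _ _))
  clear_value L r m δ R E ε₁ δ' ρ
  have hev : ∀ᶠ q in 𝓝[Ω'' ×ˢ Icc (0:ℝ) 1] (x, lam), dist q (x, lam) < ρ := by
    apply eventually_nhdsWithin_of_eventually_nhds
    exact eventually_of_mem (Metric.ball_mem_nhds _ hρ0) fun q hq => mem_ball.mp hq
  filter_upwards [hev, eventually_mem_nhdsWithin] with q hq hqs
  obtain ⟨x', lam'⟩ := q
  obtain ⟨hx', hlam'⟩ := Set.mem_prod.mp hqs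
  simp only at hx' hlam' ⊢
  rw [Prod.dist_eq] at hq
  have hdx : dist x' x < ρ := lt_of_le_of_lt (le_max_left _ _) hq
  have hdl : dist lam' lam < ρ := lt_of_le_of_lt (le_max_right _ _) hq
  -- key uniform estimate
  have hEst : ∀ y : X, dist x y ≤ R → dist x' y ≤ R →
      |FF u K t lam x y - FF u K t lam' x' y| < δ := by
    intro y h1 h2
    have hexpl : Real.exp (-2 * K * lam) ≤ E := hexpE lam hlam
    have hexpl' : Real.exp (-2 * K * lam') ≤ E := hexpE lam' hlam'
    have hdab : |dist x y - dist x' y| ≤ dist x x' := abs_dist_sub_le _ _ _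
    have hdxx : dist x x' < ε₁ := by
      rw [dist_comm]; exact lt_of_lt_of_le hdx hρε₁
    have hee : |Real.exp (-2 * K * lam') - Real.exp (-2 * K * lam)| < δ' := by
      have := hε₂ (lt_of_lt_of_le hdl hρε₂)
      rwa [Real.dist_eq] at this
    have hu' : dist (u x') (u x) < δ / 3 := hε₃ (hsub hx') (lt_of_lt_of_le hdx hρε₃)
    set p := Real.exp (-2 * K * lam) with hpdef
    set q' := Real.exp (-2 * K * lam') with hq'def
    set a := dist x y with hadef
    set b := dist x' y with hbdef
    have ha0 : 0 ≤ a := dist_nonneg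
    have hb0 : 0 ≤ b := dist_nonneg
    have hp0 : 0 < p := Real.exp_pos _
    clear_value p q' a b
    have key : |p * a ^ 2 - q' * b ^ 2| ≤ E * (2 * R) * dist x x' + δ' * R ^ 2 := by
      have h3 : p * a ^ 2 - q' * b ^ 2 = p * ((a - b) * (a + b)) + (p - q') * b ^ 2 := by ring
      rw [h3]
      refine (abs_add_le _ _).trans (add_le_add ?_ ?_)
      · rw [abs_mul, abs_mul, abs_of_pos hp0, abs_of_nonneg (by linarith : (0:ℝ) ≤ a + b)]
        have hab2 : a + b ≤ 2 * R := by linarith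
        have hinner : |a - b| * (a + b) ≤ dist x x' * (2 * R) :=
          mul_le_mul hdab hab2 (by linarith) dist_nonneg
        have houter : p * (|a - b| * (a + b)) ≤ E * (dist x x' * (2 * R)) :=
          mul_le_mul hexpl hinner (by positivity) hE0.le
        calc p * (|a - b| * (a + b)) ≤ E * (dist x x' * (2 * R)) := houter
          _ = E * (2 * R) * dist x x' := by ring
      · rw [abs_mul, abs_sub_comm, abs_of_nonneg (sq_nonneg b)]
        have hbR : b ^ 2 ≤ R ^ 2 := pow_le_pow_left₀ hb0 h2 2
        exact mul_le_mul hee.le hbR (sq_nonneg b) hδ'0.le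
    have habs : |FF u K t lam x y - FF u K t lam' x' y| ≤
        |p * a ^ 2 - q' * b ^ 2| / (2 * t) + dist (u x) (u x') := by
      have heq : FF u K t lam x y - FF u K t lam' x' y =
          (p * a ^ 2 - q' * b ^ 2) / (2 * t) - (dist (u x) (u y) - dist (u x') (u y)) := by
        simp only [FF, hpdef, hq'def, hadef, hbdef]; ring
      rw [heq]
      refine (abs_sub _ _).trans (add_le_add ?_ ?_)
      · rw [abs_div, abs_of_pos h2t]
      · exact abs_dist_sub_le _ _ _
    have e1 : E * (2 * R) * dist x x' < E * (2 * R) * ε₁ :=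
      mul_lt_mul_of_pos_left hdxx (by positivity)
    have e2 : E * (2 * R) * ε₁ = (2 * t) * (δ / 3) := by
      rw [hε₁def]; field_simp
    have e3 : δ' * R ^ 2 = (2 * t) * (δ / 3) := by
      rw [hδ'def]; field_simp
    have hfin1 : |p * a ^ 2 - q' * b ^ 2| / (2 * t) < 2 * (δ / 3) := by
      rw [div_lt_iff₀ h2t]
      linarith
    have hucomm : dist (u x) (u x') < δ / 3 := by rwa [dist_comm]
    linarith
  have hdxr : dist x x' < (r - c) / 2 := by
    rw [dist_comm]; exact lt_of_lt_of_le hdx hρrc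
  have hdx1 : dist x x' < 1 := by
    rw [dist_comm]; exact lt_of_lt_of_le hdx hρ1
  -- boundedness below of distance on the new minimizing set
  have hkey : ∀ y' ∈ minSet Ω' u K t lam' x', (c + r) / 2 ≤ dist x' y' := by
    intro y' hy'
    have hy'Ω : y' ∈ Ω' := hy'.1
    have hy'd : dist x' y' < D / 2 := hmsd x' hx' lam' hlam' y' hy'
    have hxy' : r < dist x y' := by
      by_contra hcon
      push_neg at hcon
      have hm : m ≤ FF u K t lam x y' := by
        rw [hmdef]; simpa using hz₀min (mem_closedBall'.mpr hcon)
      have h1 : dist x y' ≤ R := by simp only [hRdef]; linarith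
      have h2 : dist x' y' ≤ R := by simp only [hRdef]; linarith
      have hest := (abs_lt.mp (hEst y' h1 h2)).2
      have heq' : FF u K t lam' x' y' = fT Ω' u K t lam' x' := hy'.2.symm
      have hle2 : fT Ω' u K t lam' x' ≤ FF u K t lam' x' y₀ :=
        hfT_le x' (hsub hx') lam' y₀ hy₀Ω
      have h1' : dist x y₀ ≤ R := by simp only [hRdef]; linarith
      have h2' : dist x' y₀ ≤ R := by
        have := dist_triangle x' x y₀
        rw [dist_comm x' x] at this
        simp only [hRdef]; linarith
      have hest0 := (abs_lt.mp (hEst y₀ h1' h2')).1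
      have heq0 : FF u K t lam x y₀ = fT Ω' u K t lam x := hy₀.2.symm
      have : m < m := by
        calc m ≤ FF u K t lam x y' := hm
          _ < FF u K t lam' x' y' + δ := by linarith
          _ = fT Ω' u K t lam' x' + δ := by rw [heq']
          _ ≤ FF u K t lam' x' y₀ + δ := by linarith
          _ < FF u K t lam x y₀ + 2 * δ := by linarith
          _ = fT Ω' u K t lam x + 2 * δ := by rw [heq0]
          _ < m := by simp only [hδdef]; linarith
      exact absurd this (lt_irrefl m)
    have htri := dist_triangle x x' y'
    linarith
  obtain ⟨yy, hyy⟩ := hex x' hx' lam' hlam'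
  have hfinal : (c + r) / 2 ≤ minDist Ω' u K t lam' x' := by
    apply le_csInf ⟨dist x' yy, mem_image_of_mem _ hyy⟩
    rintro v ⟨y', hy', rfl⟩
    exact hkey y' hy'
  have : c < (c + r) / 2 := by linarith
  linarith
end

section
/- For every t ∈ (0, t₀), every λ ∈ [0,1) and every x ∈ Ω'', it holds liminf_{μ→0⁺} ( f_t(x,λ+μ) − f_t(x,λ) )/μ ≥ −e^{−2Kλ}·(K/t)·L_{t,λ}(x)². -/
open Metric Filter Set Topology

section Aux

variable {X Y : Type*} [MetricSpace X] [ProperSpace X] [MetricSpace Y]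
    {Ω' : Set X} {u : X → Y} {K t : ℝ} {x : X} {osc D : ℝ}

/-- Core structural lemma: existence of a minimizer within the ball of radius `D/2`. -/
theorem fT_core (hu : ContinuousOn u Ω') (hK : K ≤ 0) (hosc0 : 0 ≤ osc)
    (hoscle : ∀ y ∈ Ω', dist (u x) (u y) ≤ osc)
    (hball : closedBall x (D / 2) ⊆ Ω') (hxΩ' : x ∈ Ω')
    (hDpos : 0 < D) (ht0 : 0 < t) (ht : 2 * t * osc ≤ (D / 2) ^ 2)
    (l : ℝ) (hl : 0 ≤ l) :
    ∃ y₀ ∈ Ω', dist x y₀ ≤ D / 2 ∧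
      (fT Ω' u K t l x =
        Real.exp (-2 * K * l) * dist x y₀ ^ 2 / (2 * t) - dist (u x) (u y₀)) ∧
      (∀ y ∈ Ω', fT Ω' u K t l x ≤
        Real.exp (-2 * K * l) * dist x y ^ 2 / (2 * t) - dist (u x) (u y)) ∧
      (∀ y ∈ Ω', Real.exp (-2 * K * l) * dist x y ^ 2 / (2 * t) - dist (u x) (u y) ≤ 0 →
        dist x y ≤ D / 2) := by
  classical
  have hne : Nonempty Ω' := ⟨⟨x, hxΩ'⟩⟩
  set g : X → ℝ := fun y =>
    Real.exp (-2 * K * l) * dist x y ^ 2 / (2 * t) - dist (u x) (u y) with hg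
  have hcpos : (0:ℝ) < Real.exp (-2 * K * l) := Real.exp_pos _
  have hc1 : (1:ℝ) ≤ Real.exp (-2 * K * l) := by
    rw [show (1:ℝ) = Real.exp 0 by simp]
    exact Real.exp_le_exp.2 (by nlinarith)
  have hbdd : BddBelow (Set.range fun y : Ω' => g (y : X)) := by
    refine ⟨-osc, ?_⟩
    rintro r ⟨y, rfl⟩
    have h1 : 0 ≤ Real.exp (-2 * K * l) * dist x (y:X) ^ 2 / (2 * t) := by positivity
    have h2 := hoscle (y:X) y.2
    simp only [hg]
    linarith
  have hginf : ∀ y ∈ Ω', fT Ω' u K t l x ≤ g y := by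
    intro y hy
    exact ciInf_le hbdd ⟨y, hy⟩
  have hgx : g x = 0 := by simp [hg]
  -- radius bound
  have hradius : ∀ y ∈ Ω', g y ≤ 0 → dist x y ≤ D / 2 := by
    intro y hy h
    have h2 := hoscle y hy
    have h3 : Real.exp (-2 * K * l) * dist x y ^ 2 / (2 * t) ≤ osc := by
      simp only [hg] at h; linarith
    have h4 : dist x y ^ 2 ≤ 2 * t * osc := by
      rw [div_le_iff₀ (by linarith)] at h3
      nlinarith [dist_nonneg (x := x) (y := y), sq_nonneg (dist x y)]
    nlinarith [dist_nonneg (x := x) (y := y)]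
  -- compact minimization
  have hcomp : IsCompact (closedBall x (D / 2)) := isCompact_closedBall x _
  have hgc : ContinuousOn g (closedBall x (D / 2)) := by
    apply ContinuousOn.sub
    · exact Continuous.continuousOn (by fun_prop)
    · exact continuous_dist.comp_continuousOn (continuousOn_const.prodMk (hu.mono hball))
  have hxB : x ∈ closedBall x (D / 2) := by
    simp only [mem_closedBall, dist_self]; positivity
  obtain ⟨y₀, hy₀B, hy₀min⟩ := hcomp.exists_isMinOn ⟨x, hxB⟩ hgc
  have hy₀Ω' : y₀ ∈ Ω' := hball hy₀B
  refine ⟨y₀, hy₀Ω', by rwa [dist_comm x y₀, ← mem_closedBall], ?_, hginf, hradius⟩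
  refine le_antisymm (hginf y₀ hy₀Ω') (le_ciInf ?_)
  rintro ⟨y, hy⟩
  by_cases hyB : y ∈ closedBall x (D / 2)
  · exact hy₀min hyB
  · have h1 : ¬ dist x y ≤ D / 2 := by rwa [mem_closedBall, dist_comm] at hyB
    have h2 : 0 < g y := by
      by_contra h
      exact h1 (hradius y hy (by linarith))
    have h3 : g y₀ ≤ 0 := hgx ▸ hy₀min hxB
    exact le_of_lt (lt_of_le_of_lt h3 h2)

end Aux

set_option maxHeartbeats 1000000 in
theorem stmt4 {X Y : Type*} [MetricSpace X] [ProperSpace X] [MetricSpace Y]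
    (Ω' Ω'' : Set X) (hΩ'open : IsOpen Ω') (hΩ'bdd : Bornology.IsBounded Ω')
    (hΩ'ne : Ω'.Nonempty) (hΩ''open : IsOpen Ω'') (hΩ''ne : Ω''.Nonempty)
    (hsub : Ω'' ⊆ Ω')
    (u : X → Y) (hu : ContinuousOn u Ω')
    (osc : ℝ)
    (hoscBdd : BddAbove ((fun p : X × X => dist (u p.1) (u p.2)) '' (Ω' ×ˢ Ω')))
    (hosc : osc = sSup ((fun p : X × X => dist (u p.1) (u p.2)) '' (Ω' ×ˢ Ω')))
    (K : ℝ) (hK : K ≤ 0)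
    (D : ℝ) (hD : D = sInf ((fun p : X × X => dist p.1 p.2) '' (Ω'' ×ˢ Ω'ᶜ)))
    (hDpos : 0 < D)
    (Cstar t₀ : ℝ) (hC : Cstar = 2 * osc + 2) (ht₀ : t₀ = D ^ 2 / (4 * Cstar)) :
    ∀ t ∈ Ioo (0 : ℝ) t₀, ∀ lam ∈ Ico (0 : ℝ) 1, ∀ x ∈ Ω'',
      ((-(Real.exp (-2 * K * lam) * (K / t) * minDist Ω' u K t lam x ^ 2) : ℝ) : EReal)
        ≤ Filter.liminf
            (fun μ : ℝ => (((fT Ω' u K t (lam + μ) x - fT Ω' u K t lam x) / μ : ℝ) : EReal))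
            (𝓝[>] (0 : ℝ)) := by
  intro t ht lam hlam x hx
  obtain ⟨ht0, htt0⟩ := ht
  obtain ⟨hlam0, -⟩ := hlam
  have hxΩ' : x ∈ Ω' := hsub hx
  have hosc0 : 0 ≤ osc := by
    rw [hosc]
    exact le_csSup hoscBdd ⟨(x, x), ⟨hxΩ', hxΩ'⟩, by simp⟩
  have hoscle : ∀ y ∈ Ω', dist (u x) (u y) ≤ osc := by
    intro y hy
    rw [hosc]
    exact le_csSup hoscBdd ⟨(x, y), ⟨hxΩ', hy⟩, rfl⟩
  have hCpos : 0 < Cstar := by rw [hC]; linarith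
  have hball : closedBall x (D / 2) ⊆ Ω' := by
    intro z hz
    by_contra hzΩ
    have h1 : D ≤ dist x z := by
      rw [hD]
      refine csInf_le ⟨0, ?_⟩ ⟨(x, z), ⟨hx, hzΩ⟩, rfl⟩
      rintro r ⟨p, _, rfl⟩
      exact dist_nonneg
    rw [mem_closedBall, dist_comm] at hz
    linarith
  have hle : 2 * t * osc ≤ (D / 2) ^ 2 := by
    have h1 : t < D ^ 2 / (4 * Cstar) := ht₀ ▸ htt0
    rw [lt_div_iff₀ (by linarith)] at h1
    nlinarith
  have hmin := fun (l : ℝ) (hl : 0 ≤ l) =>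
    fT_core hu hK hosc0 hoscle hball hxΩ' hDpos ht0 hle l hl
  obtain ⟨y₀, hy₀Ω', hy₀d, hy₀eq, hginflam, hradlam⟩ := hmin lam hlam0
  have hy₀mem : y₀ ∈ minSet Ω' u K t lam x := ⟨hy₀Ω', hy₀eq⟩
  set L := minDist Ω' u K t lam x with hLdef
  have himbdd : ∀ r ∈ (fun y => dist x y) '' minSet Ω' u K t lam x, (0:ℝ) ≤ r := by
    rintro r ⟨z, -, rfl⟩; exact dist_nonneg
  have hL0 : 0 ≤ L :=
    le_csInf ⟨dist x y₀, ⟨y₀, hy₀mem, rfl⟩⟩ himbdd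
  have hLz : ∀ z ∈ minSet Ω' u K t lam x, L ≤ dist x z := fun z hz =>
    csInf_le ⟨0, himbdd⟩ ⟨z, hz, rfl⟩
  -- the key eventual lower bound on the difference quotient
  have key : ∀ ε, 0 < ε → ε < L → ∀ᶠ μ in 𝓝[>] (0:ℝ),
      Real.exp (-2 * K * lam) * (-K) / t * (L - ε) ^ 2 ≤
        (fT Ω' u K t (lam + μ) x - fT Ω' u K t lam x) / μ := by
    intro ε hε hεL
    have hLε1 : 0 ≤ L - ε := by linarith
    have hAsub : closedBall x (L - ε) ⊆ closedBall x (D / 2) :=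
      closedBall_subset_closedBall (le_trans (by linarith) (le_trans (hLz y₀ hy₀mem) hy₀d))
    have hgcont : ContinuousOn
        (fun y => Real.exp (-2 * K * lam) * dist x y ^ 2 / (2 * t) - dist (u x) (u y))
        (closedBall x (L - ε)) := by
      apply ContinuousOn.sub
      · exact Continuous.continuousOn (by fun_prop)
      · exact continuous_dist.comp_continuousOn
          (continuousOn_const.prodMk (hu.mono (hAsub.trans hball)))
    obtain ⟨z, hzA, hzmin⟩ := (isCompact_closedBall x (L - ε)).exists_isMinOn
      ⟨x, by simp [hLε1]⟩ hgcont
    have hzΩ' : z ∈ Ω' := hball (hAsub hzA)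
    set m := Real.exp (-2 * K * lam) * dist x z ^ 2 / (2 * t) - dist (u x) (u z) with hm
    have hfm : fT Ω' u K t lam x < m := by
      rcases lt_or_eq_of_le (hginflam z hzΩ') with h | h
      · exact h
      · exfalso
        have : L ≤ dist x z := hLz z ⟨hzΩ', h⟩
        have : dist x z ≤ L - ε := by rw [mem_closedBall, dist_comm] at hzA; exact hzA
        linarith
    have hcont : Filter.Tendsto (fun μ : ℝ => fT Ω' u K t lam x +
        (Real.exp (-2 * K * (lam + μ)) - Real.exp (-2 * K * lam)) * dist x y₀ ^ 2 / (2 * t))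
        (𝓝[>] (0:ℝ)) (𝓝 (fT Ω' u K t lam x)) := by
      have hcts : Continuous (fun μ : ℝ => fT Ω' u K t lam x +
          (Real.exp (-2 * K * (lam + μ)) - Real.exp (-2 * K * lam)) * dist x y₀ ^ 2 / (2 * t)) := by
        fun_prop
      have h0 : Filter.Tendsto (fun μ : ℝ => fT Ω' u K t lam x +
          (Real.exp (-2 * K * (lam + μ)) - Real.exp (-2 * K * lam)) * dist x y₀ ^ 2 / (2 * t))
          (𝓝[>] (0:ℝ)) (𝓝 (fT Ω' u K t lam x +
          (Real.exp (-2 * K * (lam + 0)) - Real.exp (-2 * K * lam)) * dist x y₀ ^ 2 / (2 * t))) :=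
        (hcts.tendsto 0).mono_left nhdsWithin_le_nhds
      simpa using h0
    have hev1 := hcont.eventually_lt_const hfm
    filter_upwards [hev1, self_mem_nhdsWithin] with μ hμ1 (hμ : 0 < μ)
    obtain ⟨w, hwΩ', hwd, hweq, hginfμ, -⟩ := hmin (lam + μ) (by linarith)
    have hE01 : Real.exp (-2 * K * lam) ≤ Real.exp (-2 * K * (lam + μ)) := by
      apply Real.exp_le_exp.2; nlinarith
    have hupper : fT Ω' u K t (lam + μ) x ≤ fT Ω' u K t lam x +
        (Real.exp (-2 * K * (lam + μ)) - Real.exp (-2 * K * lam)) * dist x y₀ ^ 2 / (2 * t) := by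
      have h1 := hginfμ y₀ hy₀Ω'
      have h2 : (Real.exp (-2 * K * (lam + μ)) - Real.exp (-2 * K * lam)) * dist x y₀ ^ 2 / (2 * t)
          = Real.exp (-2 * K * (lam + μ)) * dist x y₀ ^ 2 / (2 * t)
            - Real.exp (-2 * K * lam) * dist x y₀ ^ 2 / (2 * t) := by ring
      rw [hy₀eq]
      linarith
    have hfμm : fT Ω' u K t (lam + μ) x < m := lt_of_le_of_lt hupper hμ1
    -- the minimizer at lam+μ stays at distance > L - ε
    have hwdist : L - ε ≤ dist x w := by
      by_contra h
      push_neg at h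
      have hwA : w ∈ closedBall x (L - ε) := by
        rw [mem_closedBall, dist_comm]; exact le_of_lt h
      have h2 : m ≤ Real.exp (-2 * K * lam) * dist x w ^ 2 / (2 * t) - dist (u x) (u w) :=
        hzmin hwA
      have h3 : Real.exp (-2 * K * lam) * dist x w ^ 2 / (2 * t)
          ≤ Real.exp (-2 * K * (lam + μ)) * dist x w ^ 2 / (2 * t) := by
        apply div_le_div_of_nonneg_right ?_ (by linarith)
        exact mul_le_mul_of_nonneg_right hE01 (sq_nonneg _)
      rw [hweq] at hfμm
      linarith
    -- lower bound for the increment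
    have hsplit : Real.exp (-2 * K * (lam + μ))
        = Real.exp (-2 * K * lam) * Real.exp (-2 * K * μ) := by
      rw [← Real.exp_add]; ring_nf
    have hexp : -2 * K * μ + 1 ≤ Real.exp (-2 * K * μ) := Real.add_one_le_exp _
    have hElam : (0:ℝ) < Real.exp (-2 * K * lam) := Real.exp_pos _
    have hcdiff : Real.exp (-2 * K * lam) * (-2 * K * μ)
        ≤ Real.exp (-2 * K * (lam + μ)) - Real.exp (-2 * K * lam) := by
      rw [hsplit]; nlinarith
    have hlow : Real.exp (-2 * K * lam) * (-2 * K * μ) * dist x w ^ 2 / (2 * t)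
        ≤ fT Ω' u K t (lam + μ) x - fT Ω' u K t lam x := by
      have h5 := hginflam w hwΩ'
      have h6 : Real.exp (-2 * K * lam) * (-2 * K * μ) * dist x w ^ 2 / (2 * t)
          ≤ (Real.exp (-2 * K * (lam + μ)) - Real.exp (-2 * K * lam)) * dist x w ^ 2 / (2 * t) := by
        apply div_le_div_of_nonneg_right ?_ (by linarith)
        exact mul_le_mul_of_nonneg_right hcdiff (sq_nonneg _)
      have h7 : (Real.exp (-2 * K * (lam + μ)) - Real.exp (-2 * K * lam)) * dist x w ^ 2 / (2 * t)
          = Real.exp (-2 * K * (lam + μ)) * dist x w ^ 2 / (2 * t)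
            - Real.exp (-2 * K * lam) * dist x w ^ 2 / (2 * t) := by ring
      rw [hweq]
      linarith
    rw [le_div_iff₀ hμ]
    have h8 : (L - ε) ^ 2 ≤ dist x w ^ 2 := pow_le_pow_left₀ hLε1 hwdist 2
    have h9 : Real.exp (-2 * K * lam) * (-2 * K * μ) * dist x w ^ 2 / (2 * t)
        = Real.exp (-2 * K * lam) * (-K) / t * dist x w ^ 2 * μ := by
      field_simp
    have h10 : Real.exp (-2 * K * lam) * (-K) / t * (L - ε) ^ 2 * μ
        ≤ Real.exp (-2 * K * lam) * (-K) / t * dist x w ^ 2 * μ := by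
      have ha : 0 ≤ Real.exp (-2 * K * lam) * (-K) / t :=
        div_nonneg (mul_nonneg hElam.le (by linarith)) ht0.le
      exact mul_le_mul_of_nonneg_right (mul_le_mul_of_nonneg_left h8 ha) hμ.le
    linarith
  -- conclude via the characterization of liminf
  rw [le_liminf_iff]
  intro b hb
  obtain ⟨r, hbr, hrR'⟩ := EReal.exists_between_coe_real hb
  have hrR : r < -(Real.exp (-2 * K * lam) * (K / t) * L ^ 2) := EReal.coe_lt_coe_iff.1 hrR'
  have main : ∀ᶠ μ in 𝓝[>] (0:ℝ), r ≤ (fT Ω' u K t (lam + μ) x - fT Ω' u K t lam x) / μ := by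
    rcases lt_or_ge r 0 with hr0 | hr0
    · filter_upwards [self_mem_nhdsWithin] with μ (hμ : 0 < μ)
      haveI : Nonempty Ω' := ⟨⟨x, hxΩ'⟩⟩
      have hfmono : fT Ω' u K t lam x ≤ fT Ω' u K t (lam + μ) x := by
        apply le_ciInf
        rintro ⟨y, hy⟩
        refine le_trans (hginflam y hy) (sub_le_sub_right ?_ _)
        apply div_le_div_of_nonneg_right ?_ (by linarith)
        refine mul_le_mul_of_nonneg_right (Real.exp_le_exp.2 (by nlinarith)) (sq_nonneg _)
      have : (0:ℝ) ≤ (fT Ω' u K t (lam + μ) x - fT Ω' u K t lam x) / μ :=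
        div_nonneg (by linarith) hμ.le
      linarith
    · set a := Real.exp (-2 * K * lam) * (-K) / t with hadef
      have ha0 : 0 ≤ a :=
        div_nonneg (mul_nonneg (Real.exp_pos _).le (by linarith)) ht0.le
      have hra : r < a * L ^ 2 := by
        have : -(Real.exp (-2 * K * lam) * (K / t) * L ^ 2) = a * L ^ 2 := by
          rw [hadef]; ring
        linarith [this ▸ hrR]
      have hapos : 0 < a := by
        rcases ha0.lt_or_eq with h | h
        · exact h
        · exfalso; rw [← h] at hra; simp at hra; linarith
      have hLpos : 0 < L := by
        rcases hL0.lt_or_eq with h | h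
        · exact h
        · exfalso; rw [← h] at hra; simp at hra; linarith
      set s := Real.sqrt (r / a) with hsdef
      have hs0 : 0 ≤ s := Real.sqrt_nonneg _
      have hs2 : s ^ 2 = r / a := Real.sq_sqrt (div_nonneg hr0 ha0)
      have hrs : r = a * s ^ 2 := by rw [hs2]; field_simp
      have hsL : s < L := by
        refine lt_of_pow_lt_pow_left₀ 2 hL0 ?_
        rw [hs2]
        exact (div_lt_iff₀ hapos).2 (by linarith [hra])
      have hε : 0 < (L - s) / 2 := by linarith
      have hεL : (L - s) / 2 < L := by linarith
      filter_upwards [key _ hε hεL] with μ hμ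
      have h1 : s < L - (L - s) / 2 := by linarith
      have h1' : s ^ 2 < (L - (L - s) / 2) ^ 2 := pow_lt_pow_left₀ h1 hs0 (by norm_num)
      have h2 : a * s ^ 2 < a * (L - (L - s) / 2) ^ 2 := (mul_lt_mul_iff_right₀ hapos).2 h1'
      linarith
  filter_upwards [main] with μ hμ
  exact lt_of_lt_of_le hbr (EReal.coe_le_coe_iff.2 hμ)
end

section
/- For every a > 0, all t, t' with a ≤ t < t₀ and a ≤ t' < t₀, every λ ∈ [0,1] and every x ∈ Ω'', it holds |f_t(x,λ) − f_{t'}(x,λ)| ≤ e^{−2K}·(diam Ω')²/(2a²)·|t − t'|, where diam Ω' := sup{d(y,z) : y,z ∈ Ω'}. -/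
open Metric Filter Set Topology

theorem stmt5 {X Y : Type*} [MetricSpace X] [ProperSpace X] [MetricSpace Y]
    (Ω' Ω'' : Set X) (hΩ'open : IsOpen Ω') (hΩ'bdd : Bornology.IsBounded Ω')
    (hΩ'ne : Ω'.Nonempty) (hΩ''open : IsOpen Ω'') (hΩ''ne : Ω''.Nonempty)
    (hsub : Ω'' ⊆ Ω')
    (u : X → Y) (hu : ContinuousOn u Ω')
    (osc : ℝ)
    (hoscBdd : BddAbove ((fun p : X × X => dist (u p.1) (u p.2)) '' (Ω' ×ˢ Ω')))
    (hosc : osc = sSup ((fun p : X × X => dist (u p.1) (u p.2)) '' (Ω' ×ˢ Ω')))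
    (K : ℝ) (hK : K ≤ 0)
    (D : ℝ) (hD : D = sInf ((fun p : X × X => dist p.1 p.2) '' (Ω'' ×ˢ Ω'ᶜ)))
    (hDpos : 0 < D)
    (Cstar t₀ : ℝ) (hC : Cstar = 2 * osc + 2) (ht₀ : t₀ = D ^ 2 / (4 * Cstar)) :
    ∀ a > (0 : ℝ), ∀ t ∈ Ico a t₀, ∀ t' ∈ Ico a t₀, ∀ lam ∈ Icc (0 : ℝ) 1, ∀ x ∈ Ω'',
      |fT Ω' u K t lam x - fT Ω' u K t' lam x|
        ≤ Real.exp (-2 * K) * Metric.diam Ω' ^ 2 / (2 * a ^ 2) * |t - t'| := by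
  intro a ha t ht t' ht' lam hlam x hx
  have hxΩ : x ∈ Ω' := hsub hx
  have hne : Nonempty Ω' := hΩ'ne.to_subtype
  set E := Real.exp (-2 * K * lam) with hE
  have hEpos : 0 < E := Real.exp_pos _
  have hEle : E ≤ Real.exp (-2 * K) := by
    apply Real.exp_le_exp.2
    nlinarith [hlam.1, hlam.2]
  have hdiam : 0 ≤ Metric.diam Ω' := Metric.diam_nonneg
  have hbdd : ∀ s : ℝ, 0 < s → BddBelow (Set.range fun y : Ω' =>
      E * dist x (y : X) ^ 2 / (2 * s) - dist (u x) (u (y : X))) := by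
    intro s hs
    refine ⟨-osc, ?_⟩
    rintro _ ⟨y, rfl⟩
    have h1 : dist (u x) (u (y : X)) ≤ osc := by
      rw [hosc]
      exact le_csSup hoscBdd ⟨(x, (y : X)), ⟨hxΩ, y.2⟩, rfl⟩
    have h2 : 0 ≤ E * dist x (y : X) ^ 2 / (2 * s) := by positivity
    simp only
    linarith
  have key : ∀ s s' : ℝ, a ≤ s → a ≤ s' →
      fT Ω' u K s lam x - fT Ω' u K s' lam x ≤
      Real.exp (-2 * K) * Metric.diam Ω' ^ 2 / (2 * a ^ 2) * |s - s'| := by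
    intro s s' hs hs'
    have hs0 : 0 < s := lt_of_lt_of_le ha hs
    have hs'0 : 0 < s' := lt_of_lt_of_le ha hs'
    set c := Real.exp (-2 * K) * Metric.diam Ω' ^ 2 / (2 * a ^ 2) * |s - s'| with hc
    have main : fT Ω' u K s lam x - c ≤ fT Ω' u K s' lam x := by
      rw [show fT Ω' u K s' lam x = ⨅ y : Ω',
          (E * dist x (y : X) ^ 2 / (2 * s') - dist (u x) (u (y : X))) from rfl]
      apply le_ciInf
      intro y
      have h1 : fT Ω' u K s lam x ≤
          E * dist x (y : X) ^ 2 / (2 * s) - dist (u x) (u (y : X)) :=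
        ciInf_le (hbdd s hs0) y
      have hd : dist x (y : X) ≤ Metric.diam Ω' :=
        Metric.dist_le_diam_of_mem hΩ'bdd hxΩ y.2
      have hd2 : dist x (y : X) ^ 2 ≤ Metric.diam Ω' ^ 2 := by
        have := dist_nonneg (x := x) (y := (y : X))
        nlinarith
      have h4 : s' - s ≤ |s - s'| := by rw [abs_sub_comm]; exact le_abs_self _
      have haa : a * a ≤ s * s' := mul_le_mul hs hs' (le_of_lt ha) (le_of_lt hs0)
      have h3 : (s' - s) / (s * s') ≤ |s - s'| / (a * a) := by
        calc (s' - s) / (s * s') ≤ |s - s'| / (s * s') := by gcongr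
          _ ≤ |s - s'| / (a * a) := by
              apply div_le_div_of_nonneg_left (abs_nonneg _) (by positivity) haa
      have heq : E * dist x (y : X) ^ 2 / (2 * s) - E * dist x (y : X) ^ 2 / (2 * s')
          = E * dist x (y : X) ^ 2 / 2 * ((s' - s) / (s * s')) := by
        field_simp
      have h5 : E * dist x (y : X) ^ 2 / 2 * ((s' - s) / (s * s'))
          ≤ E * dist x (y : X) ^ 2 / 2 * (|s - s'| / (a * a)) := by
        apply mul_le_mul_of_nonneg_left h3 (by positivity)
      have h6 : E * dist x (y : X) ^ 2 / 2 * (|s - s'| / (a * a))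
          ≤ Real.exp (-2 * K) * Metric.diam Ω' ^ 2 / 2 * (|s - s'| / (a * a)) := by
        apply mul_le_mul_of_nonneg_right _ (by positivity)
        gcongr
      have h7 : Real.exp (-2 * K) * Metric.diam Ω' ^ 2 / 2 * (|s - s'| / (a * a)) = c := by
        rw [hc, sq]; ring
      linarith
    linarith
  rw [abs_sub_le_iff]
  constructor
  · exact key t t' ht.1 ht'.1
  · have := key t' t ht'.1 ht.1
    rwa [abs_sub_comm] at this
end

section
/- The function H : (0, t̄) → ℝ defined by H(t) := (1/m(B(q,R/4))) · ∫_{B(q,R/4)} ∫_{1/4}^{3/4} v(t,x,λ) dλ dm(x) is locally Lipschitz on (0, t̄). -/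
open Metric Filter Set Topology

lemma abs_ciInf_sub_ciInf {ι : Sort*} [Nonempty ι] {f g : ι → ℝ} {c : ℝ}
    (hf : BddBelow (Set.range f)) (hg : BddBelow (Set.range g))
    (h : ∀ i, |f i - g i| ≤ c) : |(⨅ i, f i) - ⨅ i, g i| ≤ c := by
  rw [abs_sub_le_iff]
  constructor
  · have h1 : ∀ i, (⨅ i, f i) - c ≤ g i := fun i => by
      have h2 := ciInf_le hf i
      have h3 := (abs_sub_le_iff.mp (h i)).1
      linarith
    linarith [le_ciInf h1]
  · have h1 : ∀ i, (⨅ i, g i) - c ≤ f i := fun i => by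
      have h2 := ciInf_le hg i
      have h3 := (abs_sub_le_iff.mp (h i)).2
      linarith
    linarith [le_ciInf h1]

lemma fT_bddBelow {X Y : Type*} [MetricSpace X] [MetricSpace Y]
    {Ω' : Set X} {u : X → Y} {K : ℝ} {osc : ℝ}
    (hosc : ∀ a ∈ Ω', ∀ b ∈ Ω', dist (u a) (u b) ≤ osc)
    {t : ℝ} (lam : ℝ) (ht : 0 < t) {x : X} (hx : x ∈ Ω') :
    BddBelow (Set.range fun y : Ω' =>
      Real.exp (-2 * K * lam) * dist x (y : X) ^ 2 / (2 * t) - dist (u x) (u (y : X))) := by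
  refine ⟨-osc, ?_⟩
  rintro r ⟨y, rfl⟩
  have h1 : 0 ≤ Real.exp (-2 * K * lam) * dist x (y : X) ^ 2 / (2 * t) := by positivity
  have h2 := hosc x hx y y.2
  simp only
  linarith

lemma fT_bounds {X Y : Type*} [MetricSpace X] [MetricSpace Y]
    {Ω' : Set X} {u : X → Y} {K : ℝ} {osc : ℝ}
    (hosc : ∀ a ∈ Ω', ∀ b ∈ Ω', dist (u a) (u b) ≤ osc)
    {t : ℝ} (lam : ℝ) (ht : 0 < t) {x : X} (hx : x ∈ Ω') :
    -osc ≤ fT Ω' u K t lam x ∧ fT Ω' u K t lam x ≤ 0 := by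
  haveI : Nonempty Ω' := ⟨⟨x, hx⟩⟩
  constructor
  · refine le_ciInf fun y => ?_
    have h1 : 0 ≤ Real.exp (-2 * K * lam) * dist x (y : X) ^ 2 / (2 * t) := by positivity
    have h2 := hosc x hx y y.2
    linarith
  · unfold fT
    have h := ciInf_le (fT_bddBelow (K:=K) hosc lam ht hx) (⟨x, hx⟩ : Ω')
    simpa using h

lemma fT_diff {X Y : Type*} [MetricSpace X] [MetricSpace Y]
    {Ω' : Set X} {u : X → Y} {K : ℝ} {M osc : ℝ}
    (hM : ∀ a ∈ Ω', ∀ b ∈ Ω', dist a b ≤ M)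
    (hosc : ∀ a ∈ Ω', ∀ b ∈ Ω', dist (u a) (u b) ≤ osc)
    {t s : ℝ} (lam lam' : ℝ) (ht : 0 < t) (hs : 0 < s) {x : X} (hx : x ∈ Ω') :
    |fT Ω' u K t lam x - fT Ω' u K s lam' x| ≤
      M ^ 2 / 2 * |Real.exp (-2 * K * lam) / t - Real.exp (-2 * K * lam') / s| := by
  haveI : Nonempty Ω' := ⟨⟨x, hx⟩⟩
  unfold fT
  refine abs_ciInf_sub_ciInf (fT_bddBelow hosc lam ht hx) (fT_bddBelow hosc lam' hs hx) fun y => ?_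
  have hd : dist x (y : X) ≤ M := hM x hx y y.2
  have hd0 : 0 ≤ dist x (y : X) := dist_nonneg
  have key : Real.exp (-2 * K * lam) * dist x (y : X) ^ 2 / (2 * t) - dist (u x) (u (y : X)) -
      (Real.exp (-2 * K * lam') * dist x (y : X) ^ 2 / (2 * s) - dist (u x) (u (y : X)))
      = dist x (y : X) ^ 2 / 2 * (Real.exp (-2 * K * lam) / t - Real.exp (-2 * K * lam') / s) := by
    field_simp
    ring
  rw [key, abs_mul, abs_of_nonneg (by positivity : (0:ℝ) ≤ dist x (y : X) ^ 2 / 2)]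
  gcongr

lemma fT_diff_x {X Y : Type*} [MetricSpace X] [MetricSpace Y]
    {Ω' : Set X} {u : X → Y} {K : ℝ} {M osc : ℝ}
    (hM : ∀ a ∈ Ω', ∀ b ∈ Ω', dist a b ≤ M)
    (hosc : ∀ a ∈ Ω', ∀ b ∈ Ω', dist (u a) (u b) ≤ osc)
    {t : ℝ} (lam : ℝ) (ht : 0 < t) {x x' : X} (hx : x ∈ Ω') (hx' : x' ∈ Ω') :
    |fT Ω' u K t lam x - fT Ω' u K t lam x'| ≤
      Real.exp (-2 * K * lam) * M / t * dist x x' + dist (u x) (u x') := by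
  haveI : Nonempty Ω' := ⟨⟨x, hx⟩⟩
  unfold fT
  refine abs_ciInf_sub_ciInf (fT_bddBelow hosc lam ht hx) (fT_bddBelow hosc lam ht hx') fun y => ?_
  set e := Real.exp (-2 * K * lam) with he
  have he0 : 0 < e := Real.exp_pos _
  set d := dist x (y : X)
  set d' := dist x' (y : X)
  have hd : d ≤ M := hM x hx y y.2
  have hd' : d' ≤ M := hM x' hx' y y.2
  have hdd : |d - d'| ≤ dist x x' := abs_dist_sub_le x x' (y : X)
  have hsq : |d ^ 2 - d' ^ 2| ≤ dist x x' * (2 * M) := by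
    have h1 : d ^ 2 - d' ^ 2 = (d - d') * (d + d') := by ring
    rw [h1, abs_mul, abs_of_nonneg (by positivity : (0:ℝ) ≤ d + d')]
    have : d + d' ≤ 2 * M := by linarith
    exact mul_le_mul hdd this (by positivity) dist_nonneg
  have hdu : |dist (u x) (u (y : X)) - dist (u x') (u (y : X))| ≤ dist (u x) (u x') :=
    abs_dist_sub_le _ _ _
  have expand : e * d ^ 2 / (2 * t) - dist (u x) (u (y : X)) -
      (e * d' ^ 2 / (2 * t) - dist (u x') (u (y : X)))
      = e / (2 * t) * (d ^ 2 - d' ^ 2) -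
        (dist (u x) (u (y : X)) - dist (u x') (u (y : X))) := by
    field_simp
    ring
  rw [expand]
  have h2 : |e / (2 * t) * (d ^ 2 - d' ^ 2)| ≤ e * M / t * dist x x' := by
    rw [abs_mul, abs_of_nonneg (by positivity : (0:ℝ) ≤ e / (2 * t))]
    calc e / (2 * t) * |d ^ 2 - d' ^ 2| ≤ e / (2 * t) * (dist x x' * (2 * M)) := by
          gcongr
      _ = e * M / t * dist x x' := by field_simp
  calc |e / (2 * t) * (d ^ 2 - d' ^ 2) -
        (dist (u x) (u (y : X)) - dist (u x') (u (y : X)))|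
      ≤ |e / (2 * t) * (d ^ 2 - d' ^ 2)| +
        |dist (u x) (u (y : X)) - dist (u x') (u (y : X))| := abs_sub _ _
    _ ≤ e * M / t * dist x x' + dist (u x) (u x') := add_le_add h2 hdu

lemma fT_continuous_lam {X Y : Type*} [MetricSpace X] [MetricSpace Y]
    {Ω' : Set X} {u : X → Y} {K : ℝ} {M osc : ℝ}
    (hM : ∀ a ∈ Ω', ∀ b ∈ Ω', dist a b ≤ M)
    (hosc : ∀ a ∈ Ω', ∀ b ∈ Ω', dist (u a) (u b) ≤ osc)
    {t : ℝ} (ht : 0 < t) {x : X} (hx : x ∈ Ω') :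
    Continuous fun lam => fT Ω' u K t lam x := by
  rw [continuous_iff_continuousAt]
  intro l0
  have hg : Continuous fun lam =>
      M ^ 2 / 2 * |Real.exp (-2 * K * lam) / t - Real.exp (-2 * K * l0) / t| := by
    apply Continuous.mul continuous_const
    apply Continuous.abs
    exact ((Real.continuous_exp.comp (by continuity)).div_const t).sub continuous_const
  have hg0 : Tendsto (fun lam =>
      M ^ 2 / 2 * |Real.exp (-2 * K * lam) / t - Real.exp (-2 * K * l0) / t|) (𝓝 l0) (𝓝 0) := by
    have := hg.tendsto l0
    simpa using this
  refine tendsto_iff_dist_tendsto_zero.2 (squeeze_zero (fun _ => dist_nonneg) (fun lam => ?_) hg0)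
  rw [Real.dist_eq]
  exact fT_diff hM hosc lam l0 ht ht hx

open MeasureTheory in
theorem stmt7 {X Y : Type*} [MetricSpace X] [ProperSpace X] [MetricSpace Y]
    [MeasurableSpace X] [BorelSpace X]
    (Ω' : Set X) (hΩ'open : IsOpen Ω') (hΩ'bdd : Bornology.IsBounded Ω')
    (hΩ'ne : Ω'.Nonempty)
    (q : X) (R : ℝ) (hR0 : 0 < R) (hR1 : R ≤ 1)
    (hball : closedBall q (2 * R) ⊆ Ω')
    (u : X → Y) (hu : ContinuousOn u Ω')
    (osc : ℝ)
    (hoscBdd : BddAbove ((fun p : X × X => dist (u p.1) (u p.2)) '' (Ω' ×ˢ Ω')))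
    (hosc : osc = sSup ((fun p : X × X => dist (u p.1) (u p.2)) '' (Ω' ×ˢ Ω')))
    (K : ℝ) (hK : K ≤ 0)
    (D : ℝ)
    (hD : D = sInf ((fun p : X × X => dist p.1 p.2) '' (ball q (2 * R) ×ˢ Ω'ᶜ)))
    (hDpos : 0 < D)
    (Cstar t₀ tbar : ℝ) (hC : Cstar = 2 * osc + 2) (ht₀ : t₀ = D ^ 2 / (4 * Cstar))
    (htbar : tbar = min t₀ (R ^ 2 / (64 + 64 * osc)))
    (m : Measure X) (hmfin : ∀ s : Set X, Bornology.IsBounded s → m s < ⊤)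
    (hmpos : 0 < m (ball q (R / 4))) (hmfin' : m (ball q (R / 4)) < ⊤)
    (v : ℝ → X → ℝ → ℝ) (hv : ∀ t x lam, v t x lam = -fT Ω' u K t lam x)
    (H : ℝ → ℝ)
    (hH : ∀ t, H t = ((m (ball q (R / 4))).toReal)⁻¹ *
      ∫ x in ball q (R / 4), (∫ lam in Icc (1/4 : ℝ) (3/4), v t x lam) ∂m) :
    ∀ t ∈ Ioo (0 : ℝ) tbar, ∃ ε > (0 : ℝ), ∃ c : NNReal,
      LipschitzOnWith c H (Ioo (0 : ℝ) tbar ∩ ball t ε) := by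
  intro τ hτ
  refine ⟨τ / 2, by linarith [hτ.1], ?_⟩
  obtain ⟨M, hMc⟩ := Metric.isBounded_iff.1 hΩ'bdd
  have hM : ∀ a ∈ Ω', ∀ b ∈ Ω', dist a b ≤ M := fun a ha b hb => hMc ha hb
  obtain ⟨x₀, hx₀⟩ := hΩ'ne
  have hM0 : 0 ≤ M := by have := hM x₀ hx₀ x₀ hx₀; simpa using this
  have hoscP : ∀ a ∈ Ω', ∀ b ∈ Ω', dist (u a) (u b) ≤ osc := fun a ha b hb => by
    rw [hosc]; exact le_csSup hoscBdd ⟨(a, b), ⟨ha, hb⟩, rfl⟩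
  have hosc0 : 0 ≤ osc := by have := hoscP x₀ hx₀ x₀ hx₀; simpa using this
  set a : ℝ := τ / 2 with ha
  have ha0 : 0 < a := by have := hτ.1; rw [ha]; linarith
  set E := Real.exp (-2 * K) with hE
  have hE0 : 0 < E := Real.exp_pos _
  have hElam : ∀ lam ∈ Icc (1/4 : ℝ) (3/4), Real.exp (-2 * K * lam) ≤ E := by
    intro lam hlam
    apply Real.exp_le_exp.mpr
    nlinarith [hlam.1, hlam.2]
  set C := M ^ 2 * E / (2 * a ^ 2) with hCdef
  have hC0 : 0 ≤ C := by positivity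
  have hsub : ball q (R / 4) ⊆ Ω' := fun x hx => hball (by
    have h1 : dist x q < R / 4 := mem_ball.mp hx
    exact mem_closedBall.mpr (by linarith))
  have hSmem : ∀ r ∈ Ioo (0 : ℝ) tbar ∩ ball τ (τ / 2), a < r ∧ 0 < r := by
    rintro r ⟨hr1, hr2⟩
    have h1 : |r - τ| < τ / 2 := by rwa [mem_ball, Real.dist_eq] at hr2
    have h2 := abs_lt.mp h1
    exact ⟨by rw [ha]; linarith [h2.1], hr1.1⟩
  -- Lipschitz bound for fT in t
  have hfTdiff : ∀ t s : ℝ, a < t → a < s → ∀ lam ∈ Icc (1/4 : ℝ) (3/4), ∀ x ∈ Ω',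
      |fT Ω' u K t lam x - fT Ω' u K s lam x| ≤ C * |t - s| := by
    intro t s hat has lam hlam x hx
    have ht : 0 < t := lt_trans ha0 hat
    have hs : 0 < s := lt_trans ha0 has
    refine (fT_diff hM hoscP lam lam ht hs hx).trans ?_
    have heq : Real.exp (-2 * K * lam) / t - Real.exp (-2 * K * lam) / s
        = Real.exp (-2 * K * lam) * (s - t) / (t * s) := by field_simp
    rw [heq, abs_div, abs_mul, abs_of_pos (Real.exp_pos _), abs_of_pos (mul_pos ht hs)]
    have key : Real.exp (-2 * K * lam) / (t * s) ≤ E / a ^ 2 :=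
      div_le_div₀ hE0.le (hElam lam hlam) (by positivity) (by nlinarith)
    calc M ^ 2 / 2 * (Real.exp (-2 * K * lam) * |s - t| / (t * s))
        = M ^ 2 / 2 * |s - t| * (Real.exp (-2 * K * lam) / (t * s)) := by ring
      _ ≤ M ^ 2 / 2 * |s - t| * (E / a ^ 2) :=
          mul_le_mul_of_nonneg_left key (by positivity)
      _ = C * |t - s| := by rw [abs_sub_comm s t, hCdef]; ring
  have hFcont : ∀ t : ℝ, 0 < t → ∀ x ∈ Ω', Continuous fun lam => -fT Ω' u K t lam x :=
    fun t ht x hx => (fT_continuous_lam hM hoscP ht hx).neg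
  have hIccfin : volume (Icc (1/4 : ℝ) (3/4)) < ⊤ := by
    rw [Real.volume_Icc]; exact ENNReal.ofReal_lt_top
  have hIccToReal : (volume (Icc (1/4 : ℝ) (3/4))).toReal = 1/2 := by
    rw [Real.volume_Icc, ENNReal.toReal_ofReal (by norm_num)]; norm_num
  set G : ℝ → X → ℝ := fun t x => ∫ lam in Icc (1/4 : ℝ) (3/4), -fT Ω' u K t lam x with hG
  have hFint : ∀ t : ℝ, 0 < t → ∀ x ∈ Ω',
      IntegrableOn (fun lam => -fT Ω' u K t lam x) (Icc (1/4 : ℝ) (3/4)) volume :=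
    fun t ht x hx => (hFcont t ht x hx).integrableOn_Icc
  have hGdiff : ∀ t s : ℝ, a < t → a < s → ∀ x ∈ Ω', |G t x - G s x| ≤ C * |t - s| := by
    intro t s hat has x hx
    have ht : 0 < t := lt_trans ha0 hat
    have hs : 0 < s := lt_trans ha0 has
    have hint : G t x - G s x = ∫ lam in Icc (1/4 : ℝ) (3/4),
        (-fT Ω' u K t lam x - -fT Ω' u K s lam x) :=
      (integral_sub (hFint t ht x hx) (hFint s hs x hx)).symm
    rw [hint]
    have hb := norm_setIntegral_le_of_norm_le_const (μ := volume) hIccfin (C := C * |t - s|)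
      (f := fun lam => -fT Ω' u K t lam x - -fT Ω' u K s lam x)
      (fun lam hlam => by
        rw [Real.norm_eq_abs]
        have heq : -fT Ω' u K t lam x - -fT Ω' u K s lam x
            = -(fT Ω' u K t lam x - fT Ω' u K s lam x) := by ring
        rw [heq, abs_neg]
        exact hfTdiff t s hat has lam hlam x hx)
    rw [Real.norm_eq_abs, measureReal_def, hIccToReal] at hb
    have h0 : 0 ≤ C * |t - s| := by positivity
    linarith
  have hGbdd : ∀ t : ℝ, 0 < t → ∀ x ∈ Ω', |G t x| ≤ osc := by
    intro t ht x hx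
    have hb := norm_setIntegral_le_of_norm_le_const (μ := volume) hIccfin (C := osc)
      (f := fun lam => -fT Ω' u K t lam x)
      (fun lam _ => by
        rw [Real.norm_eq_abs, abs_neg, abs_le]
        have h1 := fT_bounds (K := K) hoscP lam ht hx
        exact ⟨h1.1, by linarith [h1.2]⟩)
    rw [Real.norm_eq_abs, measureReal_def, hIccToReal] at hb
    linarith
  have hGcont : ∀ t : ℝ, 0 < t → ContinuousOn (G t) (ball q (R / 4)) := by
    intro t ht x₁ hx₁
    have hx₁Ω := hsub hx₁
    have hδ0 : Tendsto (fun x => (E * M / t * dist x x₁ + dist (u x) (u x₁)) * (1/2))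
        (𝓝[ball q (R / 4)] x₁) (𝓝 0) := by
      have hid : Tendsto (fun x : X => x) (𝓝[ball q (R / 4)] x₁) (𝓝 x₁) :=
        tendsto_id.mono_left nhdsWithin_le_nhds
      have h1 : Tendsto (fun x : X => dist x x₁) (𝓝[ball q (R / 4)] x₁) (𝓝 0) :=
        tendsto_iff_dist_tendsto_zero.1 hid
      have hu1 : Tendsto u (𝓝[ball q (R / 4)] x₁) (𝓝 (u x₁)) :=
        (hu x₁ hx₁Ω).mono_left (nhdsWithin_mono x₁ hsub)
      have h2 : Tendsto (fun x => dist (u x) (u x₁)) (𝓝[ball q (R / 4)] x₁) (𝓝 0) :=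
        tendsto_iff_dist_tendsto_zero.1 hu1
      have h3 := ((h1.const_mul (E * M / t)).add h2).mul_const (1/2 : ℝ)
      simpa using h3
    have hbound : ∀ x ∈ ball q (R / 4), dist (G t x) (G t x₁)
        ≤ (E * M / t * dist x x₁ + dist (u x) (u x₁)) * (1/2) := by
      intro x hx
      have hxΩ := hsub hx
      rw [Real.dist_eq]
      have hint : G t x - G t x₁ = ∫ lam in Icc (1/4 : ℝ) (3/4),
          (-fT Ω' u K t lam x - -fT Ω' u K t lam x₁) :=
        (integral_sub (hFint t ht x hxΩ) (hFint t ht x₁ hx₁Ω)).symm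
      rw [hint]
      have hb := norm_setIntegral_le_of_norm_le_const (μ := volume) hIccfin
        (C := E * M / t * dist x x₁ + dist (u x) (u x₁))
        (f := fun lam => -fT Ω' u K t lam x - -fT Ω' u K t lam x₁)
        (fun lam hlam => by
          rw [Real.norm_eq_abs]
          have heq : -fT Ω' u K t lam x - -fT Ω' u K t lam x₁
              = -(fT Ω' u K t lam x - fT Ω' u K t lam x₁) := by ring
          rw [heq, abs_neg]
          refine (fT_diff_x hM hoscP lam ht hxΩ hx₁Ω).trans ?_
          have h4 : Real.exp (-2 * K * lam) * M / t * dist x x₁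
              ≤ E * M / t * dist x x₁ := by
            gcongr
            exact hElam lam hlam
          linarith)
      rw [Real.norm_eq_abs, measureReal_def, hIccToReal] at hb
      linarith
    exact tendsto_iff_dist_tendsto_zero.2 (squeeze_zero'
      (Eventually.of_forall fun x => dist_nonneg)
      (eventually_nhdsWithin_of_forall hbound) hδ0)
  have hGint : ∀ t : ℝ, 0 < t → IntegrableOn (G t) (ball q (R / 4)) m := by
    intro t ht
    haveI : IsFiniteMeasure (m.restrict (ball q (R / 4))) :=
      ⟨by rwa [Measure.restrict_apply_univ]⟩
    refine Integrable.mono' (integrable_const osc)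
      ((hGcont t ht).aestronglyMeasurable measurableSet_ball) ?_
    refine (ae_restrict_iff' measurableSet_ball).2 (Eventually.of_forall fun x hx => ?_)
    rw [Real.norm_eq_abs]
    exact hGbdd t ht x (hsub hx)
  refine ⟨C.toNNReal, ?_⟩
  rw [lipschitzOnWith_iff_dist_le_mul]
  intro t htS s hsS
  obtain ⟨hat, ht0⟩ := hSmem t htS
  obtain ⟨has, hs0⟩ := hSmem s hsS
  have hH' : ∀ r : ℝ, H r = ((m (ball q (R / 4))).toReal)⁻¹ *
      ∫ x in ball q (R / 4), G r x ∂m := by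
    intro r
    rw [hH r]
    simp only [hv, hG]
  rw [Real.dist_eq, Real.dist_eq, hH' t, hH' s, ← mul_sub, abs_mul,
    abs_of_nonneg (inv_nonneg.2 ENNReal.toReal_nonneg)]
  have hsubint : (∫ x in ball q (R / 4), G t x ∂m) - ∫ x in ball q (R / 4), G s x ∂m
      = ∫ x in ball q (R / 4), (G t x - G s x) ∂m :=
    (integral_sub (hGint t ht0) (hGint s hs0)).symm
  rw [hsubint]
  have hb := norm_setIntegral_le_of_norm_le_const (μ := m) hmfin' (C := C * |t - s|)
    (f := fun x => G t x - G s x)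
    (fun x hx => by rw [Real.norm_eq_abs]; exact hGdiff t s hat has x (hsub hx))
  rw [Real.norm_eq_abs, measureReal_def] at hb
  have htR : 0 < (m (ball q (R / 4))).toReal := ENNReal.toReal_pos hmpos.ne' hmfin'.ne
  calc ((m (ball q (R / 4))).toReal)⁻¹ * |∫ x in ball q (R / 4), (G t x - G s x) ∂m|
      ≤ ((m (ball q (R / 4))).toReal)⁻¹ * (C * |t - s| * (m (ball q (R / 4))).toReal) :=
        mul_le_mul_of_nonneg_left hb (inv_nonneg.2 ENNReal.toReal_nonneg)
    _ = C * |t - s| := by field_simp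
    _ = C.toNNReal * |t - s| := by rw [Real.coe_toNNReal _ hC0]
end

section
/- Let (X,d) and (Y,d_Y) be metric spaces, Ω' ⊆ X, B ⊆ Ω', u : Ω' → Y a map, and let K ∈ ℝ, A > 0, C̄ > 0, t̄ > 0. Assume that for every x ∈ B, every t ∈ (0, t̄) and every y ∈ Ω' one has d_Y(u(x),u(y)) − e^{−K}·d(x,y)²/(2t) ≤ C̄·A²·t. Then for all x, y ∈ B with d(x,y) < e^{K/2}·A·t̄ it holds d_Y(u(x),u(y)) ≤ (C̄ + 1/2)·e^{−K/2}·A·d(x,y). -/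
open Metric Set

theorem stmt9 {X Y : Type*} [MetricSpace X] [MetricSpace Y]
    (Ω' B : Set X) (hB : B ⊆ Ω') (u : X → Y)
    (K A Cbar tbar : ℝ) (hA : 0 < A) (hC : 0 < Cbar) (ht : 0 < tbar)
    (h : ∀ x ∈ B, ∀ t ∈ Ioo (0 : ℝ) tbar, ∀ y ∈ Ω',
      dist (u x) (u y) - Real.exp (-K) * dist x y ^ 2 / (2 * t) ≤ Cbar * A ^ 2 * t) :
    ∀ x ∈ B, ∀ y ∈ B, dist x y < Real.exp (K / 2) * A * tbar →
      dist (u x) (u y) ≤ (Cbar + 1 / 2) * Real.exp (-K / 2) * A * dist x y := by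
  intro x hx y hy hlt
  have hEpos : 0 < Real.exp (-K / 2) := Real.exp_pos _
  rcases eq_or_lt_of_le (dist_nonneg : 0 ≤ dist x y) with h0 | hdpos
  · have hxy : x = y := dist_eq_zero.mp h0.symm
    subst hxy
    simp
  · have hdne : dist x y ≠ 0 := ne_of_gt hdpos
    set t := Real.exp (-K / 2) * dist x y / A with htdef
    have htpos : 0 < t := by positivity
    have hEinv : Real.exp (K / 2) = (Real.exp (-K / 2))⁻¹ := by
      rw [← Real.exp_neg]; ring_nf
    have httbar : t < tbar := by
      rw [hEinv] at hlt
      rw [htdef, div_lt_iff₀ hA]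
      calc Real.exp (-K / 2) * dist x y = dist x y * Real.exp (-K / 2) := by ring
        _ < ((Real.exp (-K / 2))⁻¹ * A * tbar) * Real.exp (-K / 2) :=
          mul_lt_mul_of_pos_right hlt hEpos
        _ = tbar * A := by field_simp
    have key := h x hx t ⟨htpos, httbar⟩ y (hB hy)
    have hEE : Real.exp (-K) = Real.exp (-K / 2) * Real.exp (-K / 2) := by
      rw [← Real.exp_add]; ring_nf
    rw [hEE] at key
    have e1 : Real.exp (-K / 2) * Real.exp (-K / 2) * dist x y ^ 2 / (2 * t)
        = Real.exp (-K / 2) * A * dist x y / 2 := by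
      rw [htdef]; field_simp
    have e2 : Cbar * A ^ 2 * t = Cbar * Real.exp (-K / 2) * A * dist x y := by
      rw [htdef]; field_simp
    rw [e1, e2] at key
    linarith
end

section
/- Let q ∈ (1,∞) and p := q/(q−1). Then liminf_{t→0⁺} f_t(x)/t ≥ −(lip u(x))^q / q, where f_t(x) := inf_{y ∈ Ω'} { d(x,y)^p/(p·t^{p−1}) − d_Y(u(x),u(y)) }. -/
open Metric Filter Set Topology

theorem stmt10 {X Y : Type*} [MetricSpace X] [MetricSpace Y]
    (Ω' : Set X) (u : X → Y) (x : X) (hx : x ∈ Ω')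
    (hbdd : BddAbove ((fun y => dist (u x) (u y)) '' Ω'))
    (lip : ℝ)
    (hlip : Filter.limsup (fun y => ((dist (u x) (u y) / dist x y : ℝ) : EReal)) (𝓝[≠] x)
      = (lip : EReal))
    (q p : ℝ) (hq : 1 < q) (hp : p = q / (q - 1))
    (f : ℝ → ℝ)
    (hf : ∀ t > (0 : ℝ),
      f t = ⨅ y : Ω', (dist x (y : X) ^ p / (p * t ^ (p - 1)) - dist (u x) (u (y : X)))) :
    ((-(lip ^ q / q) : ℝ) : EReal)
      ≤ Filter.liminf (fun t : ℝ => ((f t / t : ℝ) : EReal)) (𝓝[>] (0 : ℝ)) := by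
  have hq0 : (0:ℝ) < q := by linarith
  have hq1 : (0:ℝ) < q - 1 := by linarith
  have hpq : p.HolderConjugate q := by
    rw [Real.holderConjugate_iff]
    constructor
    · rw [hp, one_lt_div hq1]; linarith
    · rw [hp]; field_simp; ring
  have hp1 : 1 < p := hpq.lt
  have hp0 : 0 < p := hpq.left_pos
  have hp1' : 0 < p - 1 := by linarith
  -- the filter 𝓝[≠] x is nontrivial
  have hne : (𝓝[≠] x).NeBot := by
    by_contra h
    rw [not_neBot] at h
    rw [h, Filter.limsup_bot] at hlip
    exact (EReal.bot_ne_coe lip) hlip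
  -- lip is nonnegative
  have hlip0 : 0 ≤ lip := by
    have h0 : ((0:ℝ) : EReal) ≤
        Filter.liminf (fun y => ((dist (u x) (u y) / dist x y : ℝ) : EReal)) (𝓝[≠] x) := by
      refine Filter.le_liminf_of_le (by isBoundedDefault) ?_
      filter_upwards with y
      exact_mod_cast div_nonneg dist_nonneg dist_nonneg
    have h1 := Filter.liminf_le_limsup
      (u := fun y => ((dist (u x) (u y) / dist x y : ℝ) : EReal)) (f := 𝓝[≠] x)
    rw [hlip] at h1
    exact_mod_cast h0.trans h1
  -- upper bound on distances in Ω'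
  obtain ⟨M, hM⟩ := hbdd
  have hM' : ∀ y ∈ Ω', dist (u x) (u y) ≤ M := fun y hy => hM ⟨y, hy, rfl⟩
  -- key estimate for every L > lip
  have key : ∀ L : ℝ, lip < L → ((-(L ^ q / q) : ℝ) : EReal)
      ≤ Filter.liminf (fun t : ℝ => ((f t / t : ℝ) : EReal)) (𝓝[>] (0 : ℝ)) := by
    intro L hL
    have hL0 : 0 < L := lt_of_le_of_lt hlip0 hL
    have hev : ∀ᶠ y in 𝓝[≠] x,
        ((dist (u x) (u y) / dist x y : ℝ) : EReal) < (L : EReal) := by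
      refine Filter.eventually_lt_of_limsup_lt ?_ (by isBoundedDefault)
      rw [hlip]; exact_mod_cast hL
    rw [eventually_nhdsWithin_iff, Metric.eventually_nhds_iff] at hev
    obtain ⟨δ, hδ, hδev⟩ := hev
    have hLd : ∀ y : X, dist x y < δ → dist (u x) (u y) ≤ L * dist x y := by
      intro y hy
      by_cases hyx : y = x
      · subst hyx; simp [mul_nonneg hL0.le dist_nonneg]
      · have h1 := hδev (by rwa [dist_comm]) hyx
        have h2 : dist (u x) (u y) / dist x y < L := by exact_mod_cast h1
        have hd : 0 < dist x y := dist_pos.mpr (fun h => hyx h.symm)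
        have := (div_lt_iff₀ hd).mp h2
        linarith
    -- choose the threshold ε for t
    set ε : ℝ := (δ ^ p / (p * (M + 1))) ^ (1 / (p - 1)) with hεdef
    have hM0 : 0 ≤ M := le_trans (by simp) (hM' x hx)
    have hδp : 0 < δ ^ p := Real.rpow_pos_of_pos hδ p
    have hX : 0 < δ ^ p / (p * (M + 1)) := by positivity
    have hε : 0 < ε := Real.rpow_pos_of_pos hX _
    -- eventual bound
    refine Filter.le_liminf_of_le (by isBoundedDefault) ?_
    · have h1 : ∀ᶠ t in 𝓝[>] (0:ℝ), t ∈ Ioo (0:ℝ) ε :=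
        Ioo_mem_nhdsGT_of_mem ⟨le_refl 0, hε⟩
      filter_upwards [h1] with t ht
      obtain ⟨ht0, htε⟩ := ht
      have htp : 0 < t ^ (p - 1) := Real.rpow_pos_of_pos ht0 _
      have hden : 0 < p * t ^ (p - 1) := by positivity
      -- for t small, the far terms are large
      have hε' : ε ^ (p - 1) = δ ^ p / (p * (M + 1)) := by
        rw [hεdef, ← Real.rpow_mul hX.le, one_div_mul_cancel (ne_of_gt hp1'), Real.rpow_one]
      have h2 : t ^ (p - 1) < δ ^ p / (p * (M + 1)) := by
        rw [← hε']
        exact Real.rpow_lt_rpow ht0.le htε hp1'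
      rw [lt_div_iff₀ (by positivity)] at h2
      have hbig : M + 1 ≤ δ ^ p / (p * t ^ (p - 1)) := by
        rw [le_div_iff₀ hden]; nlinarith
      -- bound each term of the infimum
      have hterm : ∀ y : Ω',
          -(L ^ q / q) * t ≤ dist x (y : X) ^ p / (p * t ^ (p - 1)) - dist (u x) (u (y : X)) := by
        rintro ⟨y, hy⟩
        simp only
        have hLq : 0 ≤ L ^ q := Real.rpow_nonneg hL0.le q
        by_cases hyd : dist x y < δ
        · -- near case: Young's inequality
          have hs : 0 < t ^ (1 / q) := Real.rpow_pos_of_pos ht0 _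
          have hY := Real.young_inequality_of_nonneg
            (a := dist x y / t ^ (1 / q)) (b := L * t ^ (1 / q))
            (by positivity) (by positivity) hpq
          have e1 : dist x y / t ^ (1 / q) * (L * t ^ (1 / q)) = dist x y * L := by
            field_simp
          have e2 : (dist x y / t ^ (1 / q)) ^ p = dist x y ^ p / t ^ (p - 1) := by
            rw [Real.div_rpow dist_nonneg hs.le, ← Real.rpow_mul ht0.le]
            congr 1
            rw [hp]; field_simp
            congr 1; ring
          have e3 : (L * t ^ (1 / q)) ^ q = L ^ q * t := by
            rw [Real.mul_rpow hL0.le hs.le, ← Real.rpow_mul ht0.le, one_div_mul_cancel (ne_of_gt hq0), Real.rpow_one]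
          rw [e1, e2, e3] at hY
          have h4 : dist (u x) (u y) ≤ L * dist x y := hLd y hyd
          have e4 : dist x y ^ p / t ^ (p - 1) / p = dist x y ^ p / (p * t ^ (p - 1)) := by
            rw [div_div, mul_comm]
          rw [e4] at hY
          have e5 : -(L ^ q / q) * t = -(L ^ q * t / q) := by ring
          rw [e5]; linarith
        · -- far case
          push_neg at hyd
          have h5 : δ ^ p ≤ dist x y ^ p := Real.rpow_le_rpow hδ.le hyd hp0.le
          have h6 : M + 1 ≤ dist x y ^ p / (p * t ^ (p - 1)) := by
            refine hbig.trans ?_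
            gcongr
          have h7 : dist (u x) (u y) ≤ M := hM' y hy
          have h8 : -(L ^ q / q) * t ≤ 0 := by
            have : 0 ≤ L ^ q / q := div_nonneg hLq hq0.le
            nlinarith
          linarith
      haveI : Nonempty Ω' := ⟨⟨x, hx⟩⟩
      have hle : -(L ^ q / q) * t ≤ f t := by
        rw [hf t ht0]
        exact le_ciInf hterm
      have : -(L ^ q / q) ≤ f t / t := (le_div_iff₀ ht0).mpr hle
      exact_mod_cast this
  -- pass to the limit L → lip⁺
  have cont : Filter.Tendsto (fun L : ℝ => ((-(L ^ q / q) : ℝ) : EReal)) (𝓝[>] lip)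
      (𝓝 ((-(lip ^ q / q) : ℝ) : EReal)) := by
    apply (continuous_coe_real_ereal.tendsto _).comp
    apply Filter.Tendsto.mono_left _ nhdsWithin_le_nhds
    exact ((Real.continuousAt_rpow_const lip q (Or.inr hq0.le)).div_const q).neg
  exact le_of_tendsto cont (eventually_nhdsWithin_of_forall (fun L hL => key L hL))
end

section
/- Let q ∈ (1,2] and p := q/(q−1). Then for all sufficiently small t > 0 the set S_t(x) of minimizers defining f_t(x) is nonempty, and lim_{t→0⁺} f_t(x)/t = −‖N‖^q / q and lim_{t→0⁺} L_t(x)/t = ‖N‖^{q/p}, where ‖N‖ := max{ N(ξ) : ξ ∈ ℝⁿ, |ξ| = 1 } (which equals the pointwise Lipschitz constant lip u(x)). -/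
open Metric Filter Set Topology Asymptotics

lemma auxYoung {p q : ℝ} (hpq : p.HolderConjugate q) {a s t : ℝ}
    (ha : 0 ≤ a) (hs : 0 ≤ s) (ht : 0 < t) :
    -(a ^ q * t / q) ≤ s ^ p / (p * t ^ (p - 1)) - a * s := by
  have hy := Real.young_inequality_of_nonneg (div_nonneg hs ht.le) ha hpq
  have hdiv : (s / t) ^ p = s ^ p / t ^ p := Real.div_rpow hs ht.le p
  have htp : t ^ p = t ^ (p - 1) * t := by
    nth_rewrite 1 [show p = (p-1)+1 by ring]
    rw [Real.rpow_add ht, Real.rpow_one]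
  have h1 : (0:ℝ) < t ^ (p - 1) := Real.rpow_pos_of_pos ht _
  have hkey : (s / t) ^ p / p * t = s ^ p / (p * t ^ (p - 1)) := by
    rw [hdiv, htp]; field_simp [ht.ne']
  have h3 := mul_le_mul_of_nonneg_right hy ht.le
  have h4 : s / t * a * t = a * s := by field_simp
  rw [add_mul, hkey, h4, div_mul_eq_mul_div] at h3
  linarith [h3]

lemma auxIdent {p q : ℝ} (hqp : q.HolderConjugate p) {a : ℝ} (ha : 0 ≤ a) :
    (a ^ (q - 1)) ^ p / p - a * a ^ (q - 1) = -(a ^ q / q) := by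
  rcases eq_or_lt_of_le ha with h | h
  · rw [← h]
    rw [Real.zero_rpow hqp.sub_one_ne_zero, Real.zero_rpow hqp.symm.ne_zero,
      Real.zero_rpow hqp.ne_zero]
    simp
  · have h1 : (a ^ (q - 1)) ^ p = a ^ q := by
      rw [← Real.rpow_mul ha, hqp.sub_one_mul_conj]
    have h2 : a * a ^ (q - 1) = a ^ q := by
      calc a * a ^ (q - 1) = a ^ (1:ℝ) * a ^ (q - 1) := by rw [Real.rpow_one]
        _ = a ^ (1 + (q - 1)) := (Real.rpow_add h 1 (q - 1)).symm
        _ = a ^ q := by ring_nf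
    rw [h1, h2]
    have hm : (q - 1) * p = q := hqp.sub_one_mul_conj
    field_simp [hqp.ne_zero, hqp.symm.ne_zero]
    linear_combination (-1 : ℝ) * hm

lemma auxStab {p q : ℝ} (hqp : q.HolderConjugate p) (hp2 : 2 ≤ p) {a : ℝ} (ha : 0 ≤ a)
    {ε' : ℝ} (hε' : 0 < ε') :
    ∃ ε : ℝ, 0 < ε ∧ ε ≤ 1 ∧ ∀ σ : ℝ, 0 ≤ σ →
      σ ^ p / p - (a + ε) * σ ≤ -(a ^ q / q) + ε → |σ - a ^ (q - 1)| < ε' := by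
  have hpq := hqp.symm
  have hppos : (0:ℝ) < p := lt_of_lt_of_le two_pos hp2
  set σs := a ^ (q - 1) with hσs
  have hσs0 : 0 ≤ σs := Real.rpow_nonneg ha _
  have hmin : ∀ σ : ℝ, 0 ≤ σ → -(a ^ q / q) ≤ σ ^ p / p - a * σ := by
    intro σ hσ
    have h := auxYoung hpq ha hσ one_pos
    rw [Real.one_rpow, mul_one, mul_one] at h
    linarith
  have hσsval : σs ^ p / p - a * σs = -(a ^ q / q) := auxIdent hqp ha
  have hstrict : ∀ σ : ℝ, 0 ≤ σ → σ ≠ σs → -(a ^ q / q) < σ ^ p / p - a * σ := by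
    intro σ hσ hne
    rcases lt_or_ge (-(a ^ q / q)) (σ ^ p / p - a * σ) with h | h
    · exact h
    exfalso
    have heq : σ ^ p / p - a * σ = -(a ^ q / q) := le_antisymm h (hmin σ hσ)
    have hconv := strictConvexOn_rpow (lt_of_lt_of_le one_lt_two hp2)
    have hmid := hconv.2 (mem_Ici.2 hσ) (mem_Ici.2 hσs0) hne
      (by norm_num : (0:ℝ) < 1/2) (by norm_num : (0:ℝ) < 1/2) (by norm_num)
    simp only [smul_eq_mul] at hmid
    set m := 1/2 * σ + 1/2 * σs with hm
    have hm0 : 0 ≤ m := by positivity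
    have h5 := hmin m hm0
    have h6 : m ^ p / p < (1/2 * σ ^ p + 1/2 * σs ^ p) / p :=
      (div_lt_div_iff_of_pos_right hppos).2 hmid
    have h7 : a * m = a * σ / 2 + a * σs / 2 := by rw [hm]; ring
    have hre : (1/2 * σ ^ p + 1/2 * σs ^ p) / p = 1/2 * (σ ^ p / p) + 1/2 * (σs ^ p / p) := by
      ring
    rw [hre] at h6
    linarith
  set M := max 1 (p * (a + 2)) with hM
  have hM1 : (1:ℝ) ≤ M := le_max_left _ _
  have hbound : ∀ ε : ℝ, 0 < ε → ε ≤ 1 → ∀ σ : ℝ, 0 ≤ σ →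
      σ ^ p / p - (a + ε) * σ ≤ -(a ^ q / q) + ε → σ ≤ M := by
    intro ε hε hε1 σ hσ hineq
    rcases le_or_gt σ 1 with h1 | h1
    · exact le_trans h1 hM1
    have haq : 0 ≤ a ^ q / q := div_nonneg (Real.rpow_nonneg ha q) hqp.nonneg
    have hεσ : ε * σ ≤ σ := by nlinarith
    have h2 : σ ^ p / p ≤ (a + 1) * σ + 1 := by nlinarith
    have h3 : σ ^ p ≤ p * (a + 2) * σ := by
      have h2' := mul_le_mul_of_nonneg_left h2 hppos.le
      have hps : p * (σ ^ p / p) = σ ^ p := by field_simp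
      nlinarith
    have hσ0 : (0:ℝ) < σ := lt_trans zero_lt_one h1
    have h4 : σ ^ p = σ ^ (p - 1) * σ := by
      nth_rewrite 1 [show p = (p - 1) + 1 by ring]
      rw [Real.rpow_add hσ0, Real.rpow_one]
    have h5 : σ ^ (p - 1) ≤ p * (a + 2) := by
      rw [h4] at h3
      exact le_of_mul_le_mul_right h3 hσ0
    have h6 : σ ≤ σ ^ (p - 1) := by
      calc σ = σ ^ (1:ℝ) := (Real.rpow_one σ).symm
        _ ≤ σ ^ (p - 1) := Real.rpow_le_rpow_of_exponent_le h1.le (by linarith)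
    calc σ ≤ p * (a + 2) := le_trans h6 h5
      _ ≤ M := le_max_right _ _
  set K := Icc (0:ℝ) M \ ball σs ε' with hK
  have hcont : ContinuousOn (fun σ : ℝ => σ ^ p / p - a * σ) K := by
    apply Continuous.continuousOn
    exact ((continuous_id.rpow_const fun x => Or.inr hppos.le).div_const p).sub
      (continuous_const.mul continuous_id)
  rcases eq_empty_or_nonempty K with hKe | hKne
  · refine ⟨1, one_pos, le_refl 1, fun σ hσ hineq => ?_⟩
    have hσM := hbound 1 one_pos le_rfl σ hσ hineq
    by_contra hcon
    push_neg at hcon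
    have : σ ∈ K := ⟨⟨hσ, hσM⟩, fun hb => not_lt.2 hcon (by rw [mem_ball, Real.dist_eq] at hb; exact hb)⟩
    rw [hKe] at this
    exact this
  · have hKcomp : IsCompact K := isCompact_Icc.diff isOpen_ball
    obtain ⟨σ₀, hσ₀K, hσ₀min⟩ := hKcomp.exists_isMinOn hKne hcont
    have hσ₀ne : σ₀ ≠ σs := by
      intro hcon
      exact hσ₀K.2 (by rw [hcon]; exact mem_ball_self hε')
    have hσ₀0 : 0 ≤ σ₀ := hσ₀K.1.1
    set c := (σ₀ ^ p / p - a * σ₀) - (-(a ^ q / q)) with hc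
    have hcpos : 0 < c := sub_pos.2 (hstrict σ₀ hσ₀0 hσ₀ne)
    have hMpos : (0:ℝ) < M + 1 := by linarith
    refine ⟨min 1 (c / (2 * (M + 1))), lt_min one_pos (by positivity), min_le_left _ _, ?_⟩
    intro σ hσ hineq
    set ε := min 1 (c / (2 * (M + 1))) with hε
    have hε1 : ε ≤ 1 := min_le_left _ _
    have hεc : ε ≤ c / (2 * (M + 1)) := min_le_right _ _
    have hεpos : 0 < ε := lt_min one_pos (by positivity)
    have hσM := hbound ε hεpos hε1 σ hσ hineq
    by_contra hcon
    push_neg at hcon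
    have hσK : σ ∈ K := ⟨⟨hσ, hσM⟩, fun hb => not_lt.2 hcon (by rw [mem_ball, Real.dist_eq] at hb; exact hb)⟩
    have h7 : σ₀ ^ p / p - a * σ₀ ≤ σ ^ p / p - a * σ := hσ₀min hσK
    have h8 : ε * σ ≤ ε * M := mul_le_mul_of_nonneg_left hσM hεpos.le
    have h9 : ε * (M + 1) ≤ c / 2 := by
      calc ε * (M + 1) ≤ c / (2 * (M + 1)) * (M + 1) :=
            mul_le_mul_of_nonneg_right hεc hMpos.le
        _ = c / 2 := by field_simp
    have h10 : (a + ε) * σ = a * σ + ε * σ := by ring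
    have h11 : ε * (M + 1) = ε * M + ε := by ring
    clear_value ε c M σs K
    linarith

set_option maxHeartbeats 1000000 in
theorem stmt11 (n : ℕ) (hn : 1 ≤ n) {Y : Type*} [MetricSpace Y]
    (Ω : Set (EuclideanSpace ℝ (Fin n))) (hΩopen : IsOpen Ω)
    (u : EuclideanSpace ℝ (Fin n) → Y) (L : NNReal) (hL : 0 < L)
    (hu : LipschitzOnWith L u Ω)
    (x : EuclideanSpace ℝ (Fin n)) (hx : x ∈ Ω)
    (N : Seminorm ℝ (EuclideanSpace ℝ (Fin n)))
    (hdiff : (fun y => dist (u y) (u x) - N (y - x)) =o[𝓝[Ω] x] fun y => ‖y - x‖)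
    (q p : ℝ) (hq : q ∈ Ioc (1 : ℝ) 2) (hp : p = q / (q - 1))
    (f : ℝ → ℝ)
    (hf : ∀ t, f t = ⨅ y : Ω,
      (‖x - (y : EuclideanSpace ℝ (Fin n))‖ ^ p / (p * t ^ (p - 1))
        - dist (u x) (u (y : EuclideanSpace ℝ (Fin n)))))
    (S : ℝ → Set (EuclideanSpace ℝ (Fin n)))
    (hS : ∀ t, S t = {y ∈ Ω | f t = ‖x - y‖ ^ p / (p * t ^ (p - 1)) - dist (u x) (u y)})
    (Lt : ℝ → ℝ) (hLt : ∀ t, Lt t = sInf ((fun y => ‖x - y‖) '' S t))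
    (Nnorm : ℝ) (hN : IsGreatest ((fun ξ => N ξ) '' {ξ | ‖ξ‖ = 1}) Nnorm) :
    (∀ᶠ t in 𝓝[>] (0 : ℝ), (S t).Nonempty) ∧
    Filter.Tendsto (fun t => f t / t) (𝓝[>] (0 : ℝ)) (𝓝 (-(Nnorm ^ q / q))) ∧
    Filter.Tendsto (fun t => Lt t / t) (𝓝[>] (0 : ℝ)) (𝓝 (Nnorm ^ (q / p))) := by
  obtain ⟨hq1, hq2⟩ := hq
  have hq0 : (0:ℝ) < q := by linarith
  have hqm1 : (0:ℝ) < q - 1 := by linarith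
  have hqp : q.HolderConjugate p := (Real.holderConjugate_iff_eq_conjExponent hq1).2 hp
  have hpq := hqp.symm
  have hp1 : 1 < p := (Real.holderConjugate_iff.1 hpq).1
  have hppos : (0:ℝ) < p := hpq.pos
  have hpm1 : (0:ℝ) < p - 1 := by linarith
  have hp2 : 2 ≤ p := by
    rw [hp, le_div_iff₀ hqm1]; linarith
  have hqdp : q / p = q - 1 := hqp.div_conj_eq_sub_one
  set a := Nnorm with haa
  obtain ⟨e, he1, hea⟩ := hN.1
  have ha : 0 ≤ a := hea ▸ apply_nonneg N e
  set σs := a ^ (q - 1) with hσsdef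
  have hσs0 : 0 ≤ σs := Real.rpow_nonneg ha _
  have hLpos : (0:ℝ) < (L:ℝ) := by exact_mod_cast hL
  have hNle : ∀ ξ : EuclideanSpace ℝ (Fin n), N ξ ≤ a * ‖ξ‖ := by
    intro ξ
    rcases eq_or_ne ξ 0 with rfl | hξ
    · simp
    · have hnorm : (0:ℝ) < ‖ξ‖ := norm_pos_iff.2 hξ
      have hmem : (‖ξ‖⁻¹ • ξ) ∈ {ξ : EuclideanSpace ℝ (Fin n) | ‖ξ‖ = 1} := by
        simp only [mem_setOf_eq, norm_smul, Real.norm_eq_abs,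
          abs_of_nonneg (inv_nonneg.2 hnorm.le)]
        exact inv_mul_cancel₀ hnorm.ne'
      have h1 : N (‖ξ‖⁻¹ • ξ) ≤ a := hN.2 ⟨_, hmem, rfl⟩
      rw [map_smul_eq_mul, Real.norm_eq_abs, abs_of_nonneg (inv_nonneg.2 hnorm.le)] at h1
      calc N ξ = ‖ξ‖ * (‖ξ‖⁻¹ * N ξ) := by field_simp
        _ ≤ ‖ξ‖ * a := mul_le_mul_of_nonneg_left h1 (norm_nonneg ξ)
        _ = a * ‖ξ‖ := mul_comm _ _
  obtain ⟨r0, hr0, hball⟩ := Metric.isOpen_iff.1 hΩopen x hx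
  set r := r0 / 2 with hrdef
  have hrpos : (0:ℝ) < r := by positivity
  have hrΩ : closedBall x r ⊆ Ω :=
    (closedBall_subset_ball (by linarith)).trans hball
  have hnhds : 𝓝[Ω] x = 𝓝 x := nhdsWithin_eq_nhds.2 (hΩopen.mem_nhds hx)
  rw [hnhds] at hdiff
  have hdist : ∀ ε : ℝ, 0 < ε → ∃ δ : ℝ, 0 < δ ∧ δ ≤ r ∧
      ∀ y : EuclideanSpace ℝ (Fin n), ‖x - y‖ ≤ δ →
      dist (u x) (u y) ≤ (a + ε) * ‖x - y‖ ∧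
        N (y - x) - ε * ‖x - y‖ ≤ dist (u x) (u y) := by
    intro ε hε
    have h1 := (isLittleO_iff.1 hdiff) hε
    rw [Metric.eventually_nhds_iff] at h1
    obtain ⟨δ', hδ', h2⟩ := h1
    refine ⟨min (δ' / 2) r, by positivity, min_le_right _ _, fun y hy => ?_⟩
    have hxy : ‖x - y‖ = ‖y - x‖ := norm_sub_rev _ _
    have hyx : dist y x < δ' := by
      rw [dist_eq_norm, ← hxy]
      calc ‖x - y‖ ≤ min (δ' / 2) r := hy
        _ ≤ δ' / 2 := min_le_left _ _
        _ < δ' := by linarith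
    have h3 := h2 hyx
    simp only [Real.norm_eq_abs] at h3
    rw [abs_of_nonneg (norm_nonneg _)] at h3
    obtain ⟨h4, h5⟩ := abs_le.1 h3
    have hdc : dist (u x) (u y) = dist (u y) (u x) := dist_comm _ _
    have h6 := hNle (y - x)
    constructor
    · rw [hdc]
      calc dist (u y) (u x) ≤ N (y - x) + ε * ‖y - x‖ := by linarith
        _ ≤ a * ‖y - x‖ + ε * ‖y - x‖ := by linarith
        _ = (a + ε) * ‖x - y‖ := by rw [hxy]; ring
    · rw [hdc, hxy]
      linarith
  set G : ℝ → EuclideanSpace ℝ (Fin n) → ℝ :=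
    fun t y => ‖x - y‖ ^ p / (p * t ^ (p - 1)) - dist (u x) (u y) with hGdef
  haveI : Nonempty ↑Ω := ⟨⟨x, hx⟩⟩
  have hf' : ∀ t, f t = ⨅ y : Ω, G t (y : EuclideanSpace ℝ (Fin n)) := hf
  have hGx : ∀ t : ℝ, G t x = 0 := by
    intro t
    simp [hGdef, Real.zero_rpow (by positivity : p ≠ 0)]
  have hdistL : ∀ y ∈ Ω, dist (u x) (u y) ≤ (L:ℝ) * ‖x - y‖ := by
    intro y hy
    have := hu.dist_le_mul x hx y hy
    rwa [dist_eq_norm] at this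
  have hbdd : ∀ t : ℝ, 0 < t →
      BddBelow (range fun y : Ω => G t (y : EuclideanSpace ℝ (Fin n))) := by
    intro t ht
    refine ⟨-((L:ℝ) ^ q * t / q), ?_⟩
    rintro v ⟨⟨y, hy⟩, rfl⟩
    have h1 := auxYoung hpq hLpos.le (norm_nonneg (x - y)) ht
    have h2 := hdistL y hy
    simp only [hGdef]
    linarith
  have hfleG : ∀ t : ℝ, 0 < t → ∀ y ∈ Ω, f t ≤ G t y := by
    intro t ht y hy
    rw [hf' t]
    exact ciInf_le (hbdd t ht) ⟨y, hy⟩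
  have hfle0 : ∀ t : ℝ, 0 < t → f t ≤ 0 := by
    intro t ht
    have := hfleG t ht x hx
    rwa [hGx t] at this
  have hSmem : ∀ t : ℝ, ∀ y, y ∈ S t ↔ y ∈ Ω ∧ f t = G t y := by
    intro t y
    rw [hS t]
    exact mem_sep_iff
  -- existence of minimizers
  have hexists : ∀ t : ℝ, 0 < t → (L:ℝ) * p * t ^ (p - 1) ≤ r ^ (p - 1) →
      ∃ y₀ ∈ Ω, (∀ y ∈ Ω, G t y₀ ≤ G t y) ∧ f t = G t y₀ ∧ y₀ ∈ S t := by
    intro t ht htc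
    have htp : (0:ℝ) < t ^ (p - 1) := Real.rpow_pos_of_pos ht _
    have hKco : IsCompact (closedBall x r) := isCompact_closedBall x r
    have hGcont : ContinuousOn (G t) (closedBall x r) := by
      apply ContinuousOn.sub
      · apply Continuous.continuousOn
        exact ((continuous_const.sub continuous_id).norm.rpow_const
          fun y => Or.inr hppos.le).div_const _
      · exact continuous_dist.comp_continuousOn (continuousOn_const.prodMk ((hu.continuousOn).mono hrΩ))
    obtain ⟨y₀, hy₀K, hy₀min⟩ := hKco.exists_isMinOn ⟨x, mem_closedBall_self hrpos.le⟩ hGcont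
    have hy₀Ω : y₀ ∈ Ω := hrΩ hy₀K
    have hglobal : ∀ y ∈ Ω, G t y₀ ≤ G t y := by
      intro y hy
      rcases le_or_gt ‖x - y‖ r with hle | hlt
      · exact hy₀min (by rw [mem_closedBall, dist_eq_norm, norm_sub_rev]; exact hle)
      · have hy0x : G t y₀ ≤ G t x := hy₀min (mem_closedBall_self hrpos.le)
        rw [hGx t] at hy0x
        refine le_trans hy0x ?_
        have hs0 : (0:ℝ) < ‖x - y‖ := lt_trans hrpos hlt
        have h1 : ‖x - y‖ ^ p = ‖x - y‖ ^ (p - 1) * ‖x - y‖ := by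
          nth_rewrite 1 [show p = (p - 1) + 1 by ring]
          rw [Real.rpow_add hs0, Real.rpow_one]
        have h2 : r ^ (p - 1) ≤ ‖x - y‖ ^ (p - 1) :=
          Real.rpow_le_rpow hrpos.le hlt.le hpm1.le
        have h3 : (L:ℝ) * ‖x - y‖ ≤ ‖x - y‖ ^ p / (p * t ^ (p - 1)) := by
          rw [le_div_iff₀ (by positivity), h1]
          calc (L:ℝ) * ‖x - y‖ * (p * t ^ (p-1)) = ((L:ℝ) * p * t ^ (p-1)) * ‖x - y‖ := by
                ring
            _ ≤ r ^ (p - 1) * ‖x - y‖ := mul_le_mul_of_nonneg_right htc hs0.le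
            _ ≤ ‖x - y‖ ^ (p - 1) * ‖x - y‖ := mul_le_mul_of_nonneg_right h2 hs0.le
        have h4 := hdistL y hy
        simp only [hGdef]
        linarith
    have hfeq : f t = G t y₀ := by
      apply le_antisymm (hfleG t ht y₀ hy₀Ω)
      rw [hf' t]
      exact le_ciInf fun z => hglobal z z.2
    exact ⟨y₀, hy₀Ω, hglobal, hfeq, (hSmem t y₀).2 ⟨hy₀Ω, hfeq⟩⟩
  -- upper bound
  have hupper : ∀ ε : ℝ, 0 < ε → ∀ᶠ t in 𝓝[>] (0:ℝ), f t ≤ t * (-(a ^ q / q) + ε) := by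
    intro ε hε
    set ε₁ := ε / (σs + 1) with hε₁def
    have hε₁ : 0 < ε₁ := by positivity
    obtain ⟨δ, hδpos, hδr, hδprop⟩ := hdist ε₁ hε₁
    have hδσ : 0 < δ / (σs + 1) := by positivity
    have htend : Tendsto (fun t : ℝ => t) (𝓝[>] (0:ℝ)) (𝓝 0) :=
      tendsto_id.mono_left nhdsWithin_le_nhds
    filter_upwards [htend.eventually_lt_const hδσ, self_mem_nhdsWithin] with t htδ ht0'
    have ht0 : (0:ℝ) < t := ht0'
    set yt : EuclideanSpace ℝ (Fin n) := x + (t * σs) • e with hytdef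
    have hyx : x - yt = -((t * σs) • e) := by rw [hytdef]; abel
    have he1' : ‖e‖ = 1 := he1
    have hnorm : ‖x - yt‖ = t * σs := by
      rw [hyx, norm_neg, norm_smul, Real.norm_eq_abs,
        abs_of_nonneg (by positivity), he1', mul_one]
    have htσδ : t * σs ≤ δ := by
      have h1 : t * σs ≤ (δ / (σs + 1)) * σs := mul_le_mul_of_nonneg_right htδ.le hσs0
      have h2 : (δ / (σs + 1)) * σs ≤ δ := by
        rw [div_mul_eq_mul_div, div_le_iff₀ (by positivity)]
        nlinarith
      linarith
    have hytΩ : yt ∈ Ω := by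
      apply hrΩ
      rw [mem_closedBall, dist_eq_norm, ← norm_sub_rev, hnorm]
      linarith
    have hd := (hδprop yt (by rw [hnorm]; exact htσδ)).2
    have hytx : yt - x = (t * σs) • e := by rw [hytdef]; abel
    have hNyt : N (yt - x) = t * σs * a := by
      rw [hytx, map_smul_eq_mul, Real.norm_eq_abs, abs_of_nonneg (by positivity),
        show N e = a from hea]
    rw [hNyt, hnorm] at hd
    have hfle := hfleG t ht0 yt hytΩ
    have htp : (0:ℝ) < t ^ (p - 1) := Real.rpow_pos_of_pos ht0 _
    have h1 : ‖x - yt‖ ^ p = t ^ p * σs ^ p := by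
      rw [hnorm]; exact Real.mul_rpow ht0.le hσs0
    have h2 : t ^ p = t ^ (p - 1) * t := by
      nth_rewrite 1 [show p = (p - 1) + 1 by ring]
      rw [Real.rpow_add ht0, Real.rpow_one]
    have h3 : ‖x - yt‖ ^ p / (p * t ^ (p - 1)) = t * (σs ^ p / p) := by
      rw [h1, h2]; field_simp
    have hident : σs ^ p / p - a * σs = -(a ^ q / q) := auxIdent hqp ha
    have hidt : t * (σs ^ p / p) - t * (a * σs) = t * (-(a ^ q / q)) := by
      linear_combination t * hident
    have hεσ : ε₁ * σs ≤ ε := by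
      rw [hε₁def, div_mul_eq_mul_div, div_le_iff₀ (by positivity)]
      nlinarith
    have hεσt : t * (ε₁ * σs) ≤ t * ε := mul_le_mul_of_nonneg_left hεσ ht0.le
    have hG : G t yt ≤ t * (-(a ^ q / q) + ε) := by
      simp only [hGdef]
      rw [h3]
      linarith
    exact le_trans hfle hG
  -- main eventual statement
  have hmain : ∀ ε : ℝ, 0 < ε → ε ≤ 1 → ∀ᶠ t in 𝓝[>] (0:ℝ),
      (S t).Nonempty ∧ t * (-((a + ε) ^ q / q)) ≤ f t ∧ f t ≤ t * (-(a ^ q / q) + ε) ∧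
      ∀ y ∈ S t, (‖x - y‖ / t) ^ p / p - (a + ε) * (‖x - y‖ / t) ≤ -(a ^ q / q) + ε := by
    intro ε hε hε1
    obtain ⟨δ, hδpos, hδr, hδprop⟩ := hdist ε hε
    have htp0 : Tendsto (fun t : ℝ => (L:ℝ) * p * t ^ (p - 1)) (𝓝[>] (0:ℝ)) (𝓝 0) := by
      have hc : ContinuousAt (fun t : ℝ => t ^ (p - 1)) 0 :=
        Real.continuousAt_rpow_const 0 (p - 1) (Or.inr hpm1.le)
      have h1 : Tendsto (fun t : ℝ => t ^ (p - 1)) (𝓝 0) (𝓝 (0:ℝ)) := by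
        have := hc.tendsto
        rwa [Real.zero_rpow hpm1.ne'] at this
      have h2 := h1.const_mul ((L:ℝ) * p)
      rw [mul_zero] at h2
      exact h2.mono_left nhdsWithin_le_nhds
    have hrp : (0:ℝ) < r ^ (p - 1) := Real.rpow_pos_of_pos hrpos _
    have hδp : (0:ℝ) < δ ^ (p - 1) / 2 := by
      have := Real.rpow_pos_of_pos hδpos (p - 1); linarith
    filter_upwards [self_mem_nhdsWithin, htp0.eventually_lt_const hrp,
      htp0.eventually_lt_const hδp, hupper ε hε] with t ht0' hc1 hc2 hupp
    have ht0 : (0:ℝ) < t := ht0'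
    have htp : (0:ℝ) < t ^ (p - 1) := Real.rpow_pos_of_pos ht0 _
    obtain ⟨y₀, hy₀Ω, hy₀min, hfeq, hy₀S⟩ := hexists t ht0 hc1.le
    -- far bound
    have hfar : ∀ y ∈ Ω, δ < ‖x - y‖ → (L:ℝ) * δ ≤ G t y := by
      intro y hy hlt
      have hs0 : (0:ℝ) < ‖x - y‖ := lt_trans hδpos hlt
      have h1 : ‖x - y‖ ^ p = ‖x - y‖ ^ (p - 1) * ‖x - y‖ := by
        nth_rewrite 1 [show p = (p - 1) + 1 by ring]
        rw [Real.rpow_add hs0, Real.rpow_one]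
      have h2 : δ ^ (p - 1) ≤ ‖x - y‖ ^ (p - 1) :=
        Real.rpow_le_rpow hδpos.le hlt.le hpm1.le
      have h3 : 2 * (L:ℝ) * ‖x - y‖ ≤ ‖x - y‖ ^ p / (p * t ^ (p - 1)) := by
        rw [le_div_iff₀ (by positivity), h1]
        calc 2 * (L:ℝ) * ‖x - y‖ * (p * t ^ (p - 1))
            = (2 * ((L:ℝ) * p * t ^ (p - 1))) * ‖x - y‖ := by ring
          _ ≤ δ ^ (p - 1) * ‖x - y‖ := by
              apply mul_le_mul_of_nonneg_right _ hs0.le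
              linarith
          _ ≤ ‖x - y‖ ^ (p - 1) * ‖x - y‖ := mul_le_mul_of_nonneg_right h2 hs0.le
      have h4 := hdistL y hy
      have h5 : (L:ℝ) * δ ≤ (L:ℝ) * ‖x - y‖ := mul_le_mul_of_nonneg_left hlt.le hLpos.le
      simp only [hGdef]
      linarith
    refine ⟨⟨y₀, hy₀S⟩, ?_, hupp, ?_⟩
    · -- lower bound
      rw [hfeq]
      rcases le_or_gt ‖x - y₀‖ δ with hle | hlt
      · have hd := (hδprop y₀ hle).1
        have h1 := auxYoung hpq (by linarith : (0:ℝ) ≤ a + ε) (norm_nonneg (x - y₀)) ht0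
        have h2 : t * (-((a + ε) ^ q / q)) = -((a + ε) ^ q * t / q) := by ring
        simp only [hGdef]
        linarith
      · have hG0 := hfar y₀ hy₀Ω hlt
        have hLδ : (0:ℝ) ≤ (L:ℝ) * δ := by positivity
        have hneg : t * (-((a + ε) ^ q / q)) ≤ 0 := by
          have h1 : (0:ℝ) ≤ (a + ε) ^ q / q :=
            div_nonneg (Real.rpow_nonneg (by linarith) q) hq0.le
          have h2 : -((a + ε) ^ q / q) ≤ 0 := by linarith
          exact mul_nonpos_of_nonneg_of_nonpos ht0.le h2
        exact le_trans hneg (le_trans hLδ hG0)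
    · -- minimizers
      intro y hyS
      obtain ⟨hyΩ, hyeq⟩ := (hSmem t y).1 hyS
      have hyδ : ‖x - y‖ ≤ δ := by
        by_contra hcon
        push_neg at hcon
        have h1 := hfar y hyΩ hcon
        have h2 := hfle0 t ht0
        rw [hyeq] at h2
        have h3 : (0:ℝ) < (L:ℝ) * δ := by positivity
        exact absurd (le_trans h1 h2) (not_le.2 h3)
      set σ := ‖x - y‖ / t with hσdef
      have hσ0 : 0 ≤ σ := by positivity
      have hseq : ‖x - y‖ = t * σ := by rw [hσdef]; field_simp
      have h1 : ‖x - y‖ ^ p = t ^ p * σ ^ p := by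
        rw [hseq]; exact Real.mul_rpow ht0.le hσ0
      have h2 : t ^ p = t ^ (p - 1) * t := by
        nth_rewrite 1 [show p = (p - 1) + 1 by ring]
        rw [Real.rpow_add ht0, Real.rpow_one]
      have h3 : ‖x - y‖ ^ p / (p * t ^ (p - 1)) = t * (σ ^ p / p) := by
        rw [h1, h2]; field_simp
      have hd := (hδprop y hyδ).1
      have hGlb : t * (σ ^ p / p) - (a + ε) * (t * σ) ≤ G t y := by
        simp only [hGdef]
        rw [h3, ← hseq]
        linarith
      have h4 : t * (σ ^ p / p) - (a + ε) * (t * σ) ≤ t * (-(a ^ q / q) + ε) := by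
        rw [← hyeq] at hGlb
        linarith
      have h5 : t * (σ ^ p / p - (a + ε) * σ) ≤ t * (-(a ^ q / q) + ε) := by linarith [h4]
      exact le_of_mul_le_mul_left h5 ht0
  refine ⟨?_, ?_, ?_⟩
  · filter_upwards [hmain 1 one_pos le_rfl] with t ht
    exact ht.1
  · rw [Metric.tendsto_nhds]
    intro ε0 hε0
    have hcont : Tendsto (fun s : ℝ => (a + s) ^ q / q) (𝓝 0) (𝓝 (a ^ q / q)) := by
      have hca : ContinuousAt (fun s : ℝ => (a + s) ^ q / q) 0 := by
        apply ContinuousAt.div_const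
        exact ((continuous_const.add continuous_id).continuousAt).rpow_const (Or.inr hq0.le)
      have h1 := hca.tendsto
      simpa using h1
    have hev : ∀ᶠ s in 𝓝 (0:ℝ), (a + s) ^ q / q < a ^ q / q + ε0 / 2 :=
      hcont.eventually_lt_const (by linarith)
    obtain ⟨δc, hδc, hprop⟩ := Metric.eventually_nhds_iff.1 hev
    set ε := min (min 1 (ε0 / 2)) (δc / 2) with hεdef
    have hεpos : 0 < ε := lt_min (lt_min one_pos (by linarith)) (by linarith)
    have hεone : ε ≤ 1 := le_trans (min_le_left _ _) (min_le_left _ _)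
    have hεhalf : ε ≤ ε0 / 2 := le_trans (min_le_left _ _) (min_le_right _ _)
    have hεδ : dist ε 0 < δc := by
      rw [Real.dist_eq, sub_zero, abs_of_pos hεpos]
      calc ε ≤ δc / 2 := min_le_right _ _
        _ < δc := by linarith
    have hq2' : (a + ε) ^ q / q < a ^ q / q + ε0 / 2 := hprop hεδ
    filter_upwards [hmain ε hεpos hεone, self_mem_nhdsWithin] with t hm ht0'
    have ht0 : (0:ℝ) < t := ht0'
    obtain ⟨-, hlow, hup, -⟩ := hm
    rw [Real.dist_eq]
    have hub : f t / t ≤ -(a ^ q / q) + ε := by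
      rw [div_le_iff₀ ht0]
      linarith [hup]
    have hlb : -((a + ε) ^ q / q) ≤ f t / t := by
      rw [le_div_iff₀ ht0]
      linarith [hlow]
    rw [abs_lt]
    exact ⟨by linarith, by linarith⟩
  · have hgoal : a ^ (q / p) = σs := by rw [hqdp, hσsdef]
    rw [hgoal, Metric.tendsto_nhds]
    intro ε0 hε0
    obtain ⟨ε, hεpos, hεone, hstab⟩ := auxStab hqp hp2 ha (half_pos hε0)
    filter_upwards [hmain ε hεpos hεone, self_mem_nhdsWithin] with t hm ht0'
    have ht0 : (0:ℝ) < t := ht0'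
    obtain ⟨hne, -, -, hminz⟩ := hm
    obtain ⟨y₁, hy₁⟩ := hne
    have himg : ∀ v ∈ (fun y => ‖x - y‖) '' S t,
        t * (σs - ε0 / 2) ≤ v ∧ v ≤ t * (σs + ε0 / 2) := by
      rintro v ⟨y, hyS, rfl⟩
      have h1 := hstab (‖x - y‖ / t) (by positivity) (hminz y hyS)
      rw [← hσsdef] at h1
      obtain ⟨h2, h3⟩ := abs_lt.1 h1
      have hseq : ‖x - y‖ = t * (‖x - y‖ / t) := by field_simp
      constructor
      · have h4 := mul_le_mul_of_nonneg_left
          (by linarith : σs - ε0 / 2 ≤ ‖x - y‖ / t) ht0.le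
        linarith [h4, hseq]
      · have h4 := mul_le_mul_of_nonneg_left
          (by linarith : ‖x - y‖ / t ≤ σs + ε0 / 2) ht0.le
        linarith [h4, hseq]
    have hne' : ((fun y => ‖x - y‖) '' S t).Nonempty := ⟨_, ⟨y₁, hy₁, rfl⟩⟩
    have hbddb : BddBelow ((fun y => ‖x - y‖) '' S t) :=
      ⟨t * (σs - ε0 / 2), fun v hv => (himg v hv).1⟩
    have hle1 : Lt t ≤ t * (σs + ε0 / 2) := by
      rw [hLt]
      exact le_trans (csInf_le hbddb ⟨y₁, hy₁, rfl⟩) (himg _ ⟨y₁, hy₁, rfl⟩).2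
    have hge1 : t * (σs - ε0 / 2) ≤ Lt t := by
      rw [hLt]
      exact le_csInf hne' fun v hv => (himg v hv).1
    rw [Real.dist_eq, abs_lt]
    have hub : Lt t / t ≤ σs + ε0 / 2 := by
      rw [div_le_iff₀ ht0]
      linarith [hle1]
    have hlb : σs - ε0 / 2 ≤ Lt t / t := by
      rw [le_div_iff₀ ht0]
      linarith [hge1]
    exact ⟨by linarith, by linarith⟩
end

section
/- There exists t* > 0, depending only on p, l₀ and R, such that for every fixed t ∈ (0, t*): the function x ↦ f_t(x) is Lipschitz on B(o,R), and the function x ↦ L_t(x) is lower semicontinuous on B(o,R). -/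
open Metric Filter Set Topology

/-- Scalar Lipschitz estimate for `rpow` on `[0, M]`. -/
theorem rpow_lip_aux {p M a b : ℝ} (hp : 1 ≤ p) (ha : 0 ≤ a) (hb : 0 ≤ b)
    (haM : a ≤ M) (hbM : b ≤ M) :
    a ^ p - b ^ p ≤ p * M ^ (p - 1) * |a - b| := by
  have hM : 0 ≤ M := ha.trans haM
  have hC : 0 ≤ p * M ^ (p - 1) := mul_nonneg (by linarith) (Real.rpow_nonneg hM _)
  have hLip : LipschitzOnWith (NNReal.mk (p * M ^ (p - 1)) hC) (fun x : ℝ => x ^ p) (Icc 0 M) := by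
    apply (convex_Icc (0 : ℝ) M).lipschitzOnWith_of_nnnorm_hasDerivWithin_le
      (f' := fun x => p * x ^ (p - 1))
    · intro x hx
      exact (Real.hasDerivAt_rpow_const (Or.inr hp)).hasDerivWithinAt
    · intro x hx
      rw [← NNReal.coe_le_coe, coe_nnnorm, Real.norm_eq_abs, NNReal.coe_mk,
        abs_of_nonneg (mul_nonneg (by linarith) (Real.rpow_nonneg hx.1 _))]
      exact mul_le_mul_of_nonneg_left (Real.rpow_le_rpow hx.1 hx.2 (by linarith)) (by linarith)
  have h := lipschitzOnWith_iff_dist_le_mul.mp hLip a ⟨ha, haM⟩ b ⟨hb, hbM⟩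
  rw [Real.dist_eq, Real.dist_eq, NNReal.coe_mk] at h
  calc a ^ p - b ^ p ≤ |a ^ p - b ^ p| := le_abs_self _
    _ ≤ p * M ^ (p - 1) * |a - b| := h

theorem stmt13 {X Y : Type*} [MetricSpace X] [ProperSpace X] [MetricSpace Y]
    (o : X) (R : ℝ) (hR : 0 < R)
    (u : X → Y) (l₀ : ℝ) (hl₀ : 0 < l₀)
    (hu : ∀ x ∈ ball o (2 * R), ∀ y ∈ ball o (2 * R), dist (u x) (u y) ≤ l₀ * dist x y)
    (q p : ℝ) (hq : q ∈ Ioc (1 : ℝ) 2) (hp : p = q / (q - 1))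
    (f : ℝ → X → ℝ)
    (hf : ∀ t x, f t x = ⨅ y : ball o (2 * R),
      (dist x (y : X) ^ p / (p * t ^ (p - 1)) - dist (u x) (u (y : X))))
    (S : ℝ → X → Set X)
    (hS : ∀ t x, S t x = {y ∈ ball o (2 * R) |
      f t x = dist x y ^ p / (p * t ^ (p - 1)) - dist (u x) (u y)})
    (Lt : ℝ → X → ℝ) (hLt : ∀ t x, Lt t x = sInf ((fun y => dist x y) '' S t x)) :
    ∃ tstar > (0 : ℝ), ∀ t ∈ Ioo (0 : ℝ) tstar,
      (∃ c : NNReal, LipschitzOnWith c (f t) (ball o R)) ∧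
      LowerSemicontinuousOn (Lt t) (ball o R) := by
  obtain ⟨hq1, hq2⟩ := hq
  have hq1' : 0 < q - 1 := by linarith
  have hp2 : 2 ≤ p := by
    rw [hp, le_div_iff₀ hq1']; linarith
  have hp1 : 1 < p := by linarith
  have hp0 : 0 < p := by linarith
  have hpm0 : 0 < p - 1 := by linarith
  set C := (p * l₀) ^ (1 / (p - 1)) with hC
  have hC0 : 0 < C := Real.rpow_pos_of_pos (by positivity) _
  refine ⟨R / (C + 1), by positivity, ?_⟩
  intro t ht
  obtain ⟨ht0, htlt⟩ := ht
  -- basic positivity facts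
  have htp : (0 : ℝ) < t ^ (p - 1) := Real.rpow_pos_of_pos ht0 _
  have hden : (0 : ℝ) < p * t ^ (p - 1) := by positivity
  set r := C * t with hr
  have hr0 : 0 ≤ r := by positivity
  have hrR : r < R := by
    have h1 : C * t < C * (R / (C + 1)) := by
      exact mul_lt_mul_of_pos_left htlt hC0
    have h2 : C * (R / (C + 1)) < R := by
      rw [mul_div_assoc', div_lt_iff₀ (by positivity)]
      nlinarith
    linarith
  have hsub : ball o R ⊆ ball o (2 * R) := ball_subset_ball (by linarith)
  have hball2 : o ∈ ball o (2 * R) := mem_ball_self (by linarith)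
  haveI : Nonempty ↥(ball o (2 * R)) := ⟨⟨o, hball2⟩⟩
  have hM : ∀ x ∈ ball o R, ∀ y ∈ ball o (2 * R), dist x y ≤ 3 * R := by
    intro x hx y hy
    have h1 : dist x o < R := mem_ball.1 hx
    have h2 : dist y o < 2 * R := mem_ball.1 hy
    calc dist x y ≤ dist x o + dist o y := dist_triangle _ _ _
      _ = dist x o + dist y o := by rw [dist_comm o y]
      _ ≤ 3 * R := by linarith
  -- boundedness from below of the family
  have hbdd : ∀ x ∈ ball o R, BddBelow (Set.range fun y : ↥(ball o (2 * R)) =>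
      dist x (y : X) ^ p / (p * t ^ (p - 1)) - dist (u x) (u (y : X))) := by
    intro x hx
    refine ⟨-(l₀ * (3 * R)), ?_⟩
    rintro v ⟨⟨y, hy⟩, rfl⟩
    have h1 : 0 ≤ dist x y ^ p / (p * t ^ (p - 1)) :=
      div_nonneg (Real.rpow_nonneg dist_nonneg _) hden.le
    have h2 : dist (u x) (u y) ≤ l₀ * (3 * R) :=
      (hu x (hsub hx) y hy).trans (mul_le_mul_of_nonneg_left (hM x hx y hy) hl₀.le)
    simp only []
    linarith
  have hfle : ∀ x ∈ ball o R, ∀ y ∈ ball o (2 * R),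
      f t x ≤ dist x y ^ p / (p * t ^ (p - 1)) - dist (u x) (u y) := by
    intro x hx y hy
    rw [hf t x]
    exact ciInf_le (hbdd x hx) ⟨y, hy⟩
  -- f t x ≤ 0
  have hfle0 : ∀ x ∈ ball o R, f t x ≤ 0 := by
    intro x hx
    have h := hfle x hx x (hsub hx)
    simpa [dist_self, Real.zero_rpow hp0.ne'] using h
  -- Claim B : sublevel points are close
  have hclaimB : ∀ x ∈ ball o R, ∀ y ∈ ball o (2 * R),
      dist x y ^ p / (p * t ^ (p - 1)) - dist (u x) (u y) ≤ 0 → dist x y ≤ r := by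
    intro x hx y hy hle
    set d := dist x y with hd
    rcases eq_or_lt_of_le (dist_nonneg : 0 ≤ d) with hd0 | hd0
    · rw [hd, ← hd0]; exact hr0
    · have h1 : d ^ p / (p * t ^ (p - 1)) ≤ dist (u x) (u y) := by linarith
      have h2 : d ^ p ≤ (p * t ^ (p - 1)) * (l₀ * d) := by
        rw [div_le_iff₀ hden] at h1
        calc d ^ p ≤ dist (u x) (u y) * (p * t ^ (p - 1)) := h1
          _ ≤ (l₀ * d) * (p * t ^ (p - 1)) :=
              mul_le_mul_of_nonneg_right (hu x (hsub hx) y hy) hden.le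
          _ = (p * t ^ (p - 1)) * (l₀ * d) := by ring
      have hdp : d ^ p = d ^ (p - 1) * d := by
        nth_rewrite 1 [show p = (p - 1) + 1 by ring]
        rw [Real.rpow_add hd0, Real.rpow_one]
      have h3 : d ^ (p - 1) ≤ p * l₀ * t ^ (p - 1) := by
        have h4 : d ^ (p - 1) * d ≤ (p * l₀ * t ^ (p - 1)) * d := by
          rw [← hdp]; nlinarith [h2]
        exact le_of_mul_le_mul_right h4 hd0
      have h5 : d = (d ^ (p - 1)) ^ (p - 1)⁻¹ :=
        (Real.rpow_rpow_inv dist_nonneg hpm0.ne').symm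
      calc d = (d ^ (p - 1)) ^ (p - 1)⁻¹ := h5
        _ ≤ (p * l₀ * t ^ (p - 1)) ^ (p - 1)⁻¹ :=
            Real.rpow_le_rpow (Real.rpow_nonneg dist_nonneg _) h3 (by positivity)
        _ = (p * l₀) ^ (p - 1)⁻¹ * (t ^ (p - 1)) ^ (p - 1)⁻¹ :=
            Real.mul_rpow (by positivity) (by positivity)
        _ = C * t := by
            rw [Real.rpow_rpow_inv ht0.le hpm0.ne', hC, one_div]
  -- continuity of u on the big ball
  have huLip : LipschitzOnWith l₀.toNNReal u (ball o (2 * R)) := by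
    rw [lipschitzOnWith_iff_dist_le_mul]
    intro x hx y hy
    rw [Real.coe_toNNReal _ hl₀.le]
    exact hu x hx y hy
  have hucont : ContinuousOn u (ball o (2 * R)) := huLip.continuousOn
  -- Claim C : the infimum is attained, with minimizers in `closedBall x r`
  have hSne : ∀ x ∈ ball o R, ∃ y₀ ∈ S t x, True := by
    intro x hx
    have hcb : closedBall x r ⊆ ball o (2 * R) := by
      intro y hy
      have h1 : dist y x ≤ r := mem_closedBall.1 hy
      have h2 : dist x o < R := mem_ball.1 hx
      rw [mem_ball]
      calc dist y o ≤ dist y x + dist x o := dist_triangle _ _ _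
        _ < 2 * R := by linarith
    have hconty : ContinuousOn
        (fun y => dist x y ^ p / (p * t ^ (p - 1)) - dist (u x) (u y)) (closedBall x r) := by
      have c1 : Continuous fun y : X => dist x y ^ p / (p * t ^ (p - 1)) :=
        ((continuous_const.dist continuous_id).rpow_const (fun y => Or.inr hp0.le)).div_const _
      have c2 : ContinuousOn (fun y => dist (u x) (u y)) (closedBall x r) :=
        (continuous_const.dist continuous_id).comp_continuousOn (hucont.mono hcb)
      exact c1.continuousOn.sub c2
    obtain ⟨y₀, hy₀cb, hy₀min⟩ := (isCompact_closedBall x r).exists_isMinOn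
      ⟨x, mem_closedBall_self hr0⟩ hconty
    have hy₀min' := isMinOn_iff.mp hy₀min
    have hy₀le0 : dist x y₀ ^ p / (p * t ^ (p - 1)) - dist (u x) (u y₀) ≤ 0 := by
      have h := hy₀min' x (mem_closedBall_self hr0)
      simpa [dist_self, Real.zero_rpow hp0.ne'] using h
    have heq : f t x = dist x y₀ ^ p / (p * t ^ (p - 1)) - dist (u x) (u y₀) := by
      refine le_antisymm (hfle x hx y₀ (hcb hy₀cb)) ?_
      rw [hf t x]
      refine le_ciInf ?_
      rintro ⟨y, hy⟩
      rcases le_or_gt (dist x y ^ p / (p * t ^ (p - 1)) - dist (u x) (u y)) 0 with h | h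
      · have hdy : dist x y ≤ r := hclaimB x hx y hy h
        exact hy₀min' y (mem_closedBall'.2 hdy)
      · linarith
    refine ⟨y₀, ?_, trivial⟩
    rw [hS t x]
    exact ⟨hcb hy₀cb, heq⟩
  have hSsub : ∀ x ∈ ball o R, ∀ y ∈ S t x, dist x y ≤ r := by
    intro x hx y hy
    rw [hS t x] at hy
    obtain ⟨hy1, hy2⟩ := hy
    exact hclaimB x hx y hy1 (hy2 ▸ hfle0 x hx)
  -- The Lipschitz constant
  set K : ℝ := (3 * R) ^ (p - 1) / t ^ (p - 1) + l₀ with hK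
  have hK0 : 0 ≤ K := by positivity
  have hkey : ∀ x ∈ ball o R, ∀ x' ∈ ball o R, f t x - K * dist x x' ≤ f t x' := by
    intro x hx x' hx'
    rw [hf t x']
    refine le_ciInf ?_
    rintro ⟨y, hy⟩
    have h1 : f t x ≤ dist x y ^ p / (p * t ^ (p - 1)) - dist (u x) (u y) := hfle x hx y hy
    have hA : dist x y ^ p - dist x' y ^ p ≤ p * (3 * R) ^ (p - 1) * |dist x y - dist x' y| :=
      rpow_lip_aux hp1.le dist_nonneg dist_nonneg (hM x hx y hy) (hM x' hx' y hy)
    have habs : |dist x y - dist x' y| ≤ dist x x' := abs_dist_sub_le x x' y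
    have hB : dist (u x') (u y) - dist (u x) (u y) ≤ l₀ * dist x x' := by
      have h3 : |dist (u x') (u y) - dist (u x) (u y)| ≤ dist (u x') (u x) :=
        abs_dist_sub_le _ _ _
      have h4 : dist (u x') (u x) ≤ l₀ * dist x' x := hu x' (hsub hx') x (hsub hx)
      rw [dist_comm x' x] at h4
      calc dist (u x') (u y) - dist (u x) (u y)
          ≤ |dist (u x') (u y) - dist (u x) (u y)| := le_abs_self _
        _ ≤ dist (u x') (u x) := h3
        _ ≤ l₀ * dist x x' := h4
    have hdiff : dist x y ^ p / (p * t ^ (p - 1)) - dist x' y ^ p / (p * t ^ (p - 1))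
        ≤ (3 * R) ^ (p - 1) / t ^ (p - 1) * dist x x' := by
      have h5 : dist x y ^ p - dist x' y ^ p ≤ p * (3 * R) ^ (p - 1) * dist x x' :=
        hA.trans (mul_le_mul_of_nonneg_left habs (by positivity))
      have h6 : (dist x y ^ p - dist x' y ^ p) / (p * t ^ (p - 1))
          ≤ (p * (3 * R) ^ (p - 1) * dist x x') / (p * t ^ (p - 1)) := by
        gcongr
      have h7 : (p * (3 * R) ^ (p - 1) * dist x x') / (p * t ^ (p - 1))
          = (3 * R) ^ (p - 1) / t ^ (p - 1) * dist x x' := by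
        field_simp
      rw [div_sub_div_same]
      linarith
    rw [hK]
    linarith
  have hLip : ∃ c : NNReal, LipschitzOnWith c (f t) (ball o R) := by
    refine ⟨NNReal.mk K hK0, ?_⟩
    rw [lipschitzOnWith_iff_dist_le_mul]
    intro x hx x' hx'
    rw [Real.dist_eq, NNReal.coe_mk, abs_sub_le_iff]
    constructor
    · have := hkey x hx x' hx'
      linarith
    · have := hkey x' hx' x hx
      rw [dist_comm x' x] at this
      linarith
  refine ⟨hLip, ?_⟩
  -- Lower semicontinuity of Lt t
  obtain ⟨c, hlip⟩ := hLip
  have hfcont : ContinuousOn (f t) (ball o R) := hlip.continuousOn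
  intro x hx y' hy'
  by_contra hcon
  rw [Filter.not_eventually] at hcon
  simp only [not_lt] at hcon
  have hfreq := hcon.and_eventually self_mem_nhdsWithin
  obtain ⟨xs, hxs_t, hxs⟩ := exists_seq_forall_of_frequently hfreq
  -- choose near-minimizers
  have hys : ∀ n : ℕ, ∃ y, y ∈ S t (xs n) ∧ dist (xs n) y < y' + 1 / (n + 1) := by
    intro n
    have hxn : xs n ∈ ball o R := (hxs n).2
    obtain ⟨y₀, hy₀, -⟩ := hSne (xs n) hxn
    have hDne : ((fun y => dist (xs n) y) '' S t (xs n)).Nonempty := ⟨_, ⟨y₀, hy₀, rfl⟩⟩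
    have hDbdd : BddBelow ((fun y => dist (xs n) y) '' S t (xs n)) := by
      refine ⟨0, ?_⟩
      rintro v ⟨z, hz, rfl⟩
      exact dist_nonneg
    have hlt : sInf ((fun y => dist (xs n) y) '' S t (xs n)) < y' + 1 / (n + 1) := by
      rw [← hLt t (xs n)]
      have h1 : (0 : ℝ) < 1 / ((n : ℝ) + 1) := by positivity
      have h2 := (hxs n).1
      linarith
    obtain ⟨d, ⟨z, hz, rfl⟩, hdlt⟩ := (csInf_lt_iff hDbdd hDne).1 hlt
    exact ⟨z, hz, hdlt⟩
  choose ys hysS hysd using hys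
  have hmemS : ∀ n, ys n ∈ ball o (2 * R) ∧
      f t (xs n) = dist (xs n) (ys n) ^ p / (p * t ^ (p - 1)) - dist (u (xs n)) (u (ys n)) := by
    intro n
    have h := hysS n
    rw [hS t (xs n)] at h
    exact h
  have hysr : ∀ n, dist (xs n) (ys n) ≤ r := fun n => hSsub (xs n) (hxs n).2 (ys n) (hysS n)
  have hysK : ∀ n, ys n ∈ closedBall o (R + r) := by
    intro n
    rw [mem_closedBall]
    have h1 : dist (xs n) o < R := mem_ball.1 (hxs n).2
    calc dist (ys n) o ≤ dist (ys n) (xs n) + dist (xs n) o := dist_triangle _ _ _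
      _ = dist (xs n) (ys n) + dist (xs n) o := by rw [dist_comm]
      _ ≤ R + r := by have := hysr n; linarith
  obtain ⟨y, hyK, φ, hφ, hyt⟩ := (isCompact_closedBall o (R + r)).tendsto_subseq hysK
  have hxφ : Tendsto (fun n => xs (φ n)) atTop (𝓝[ball o R] x) :=
    hxs_t.comp hφ.tendsto_atTop
  have hxφ' : Tendsto (fun n => xs (φ n)) atTop (𝓝 x) :=
    hxφ.mono_right nhdsWithin_le_nhds
  have hdxy : Tendsto (fun n => dist (xs (φ n)) (ys (φ n))) atTop (𝓝 (dist x y)) :=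
    hxφ'.dist hyt
  -- dist x y ≤ r
  have hxyr : dist x y ≤ r :=
    le_of_tendsto hdxy (Eventually.of_forall fun n => hysr (φ n))
  -- dist x y ≤ y'
  have hxyy' : dist x y ≤ y' := by
    have hb : Tendsto (fun n : ℕ => y' + 1 / ((n : ℝ) + 1)) atTop (𝓝 (y' + 0)) :=
      tendsto_const_nhds.add tendsto_one_div_add_atTop_nhds_zero_nat
    rw [add_zero] at hb
    refine le_of_tendsto_of_tendsto hdxy hb (Eventually.of_forall fun n => ?_)
    have h1 : dist (xs (φ n)) (ys (φ n)) < y' + 1 / ((φ n : ℝ) + 1) := hysd (φ n)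
    have h2 : (1 : ℝ) / ((φ n : ℝ) + 1) ≤ 1 / ((n : ℝ) + 1) := by
      apply one_div_le_one_div_of_le (by positivity)
      have := hφ.le_apply (x := n)
      exact_mod_cast add_le_add_left (Nat.cast_le.2 this) 1
    exact le_of_lt (lt_of_lt_of_le h1 (by linarith))
  -- y is in the big ball
  have hy2R : y ∈ ball o (2 * R) := by
    rw [mem_ball]
    have h1 : dist x o < R := mem_ball.1 hx
    calc dist y o ≤ dist y x + dist x o := dist_triangle _ _ _
      _ = dist x y + dist x o := by rw [dist_comm]
      _ < 2 * R := by linarith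
  -- limits : f t x = g x y
  have hL1 : Tendsto (fun n => f t (xs (φ n))) atTop (𝓝 (f t x)) :=
    ((hfcont x hx).tendsto).comp hxφ
  have hL2 : Tendsto (fun n => dist (xs (φ n)) (ys (φ n)) ^ p / (p * t ^ (p - 1))
      - dist (u (xs (φ n))) (u (ys (φ n)))) atTop
      (𝓝 (dist x y ^ p / (p * t ^ (p - 1)) - dist (u x) (u y))) := by
    have hA : Tendsto (fun n => dist (xs (φ n)) (ys (φ n)) ^ p / (p * t ^ (p - 1))) atTop
        (𝓝 (dist x y ^ p / (p * t ^ (p - 1)))) := by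
      have := (Real.continuousAt_rpow_const (dist x y) p (Or.inr hp0.le)).tendsto.comp hdxy
      exact this.div_const _
    have hux : Tendsto (fun n => u (xs (φ n))) atTop (𝓝 (u x)) :=
      ((hucont.continuousAt (isOpen_ball.mem_nhds (hsub hx))).tendsto).comp hxφ'
    have huy : Tendsto (fun n => u (ys (φ n))) atTop (𝓝 (u y)) :=
      ((hucont.continuousAt (isOpen_ball.mem_nhds hy2R)).tendsto).comp hyt
    exact hA.sub (hux.dist huy)
  have heq : f t x = dist x y ^ p / (p * t ^ (p - 1)) - dist (u x) (u y) := by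
    refine tendsto_nhds_unique hL1 ?_
    refine Tendsto.congr (fun n => ?_) hL2
    exact (hmemS (φ n)).2.symm
  -- conclude
  have hymem : y ∈ S t x := by
    rw [hS t x]
    exact ⟨hy2R, heq⟩
  have hLtle : Lt t x ≤ dist x y := by
    rw [hLt t x]
    have hDbdd : BddBelow ((fun z => dist x z) '' S t x) := by
      refine ⟨0, ?_⟩
      rintro v ⟨z, hz, rfl⟩
      exact dist_nonneg
    exact csInf_le hDbdd ⟨y, hymem, rfl⟩
  linarith
end

section
/- Let H be a real inner product space with distance d(a,b) := ‖a−b‖, let P, Q, R, S ∈ H, and let Q_m := (Q+R)/2 be the midpoint of Q and R. Then (d(P,S) − d(Q,R))·d(Q,R) ≥ ( d(P,Q_m)² − d(P,Q)² − d(Q_m,Q)² ) + ( d(S,Q_m)² − d(S,R)² − d(Q_m,R)² ). -/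
open scoped RealInnerProductSpace


theorem stmt16 {H : Type*} [NormedAddCommGroup H] [InnerProductSpace ℝ H]
    (P Q R S : H) (Qm : H) (hQm : Qm = midpoint ℝ Q R) :
    (dist P S - dist Q R) * dist Q R ≥
      (dist P Qm ^ 2 - dist P Q ^ 2 - dist Qm Q ^ 2) +
        (dist S Qm ^ 2 - dist S R ^ 2 - dist Qm R ^ 2) := by
  subst hQm
  have h := real_inner_le_norm (P - S) (Q - R)
  have e : ∀ x y : H, dist x y ^ 2 = (inner ℝ (x - y) (x - y) : ℝ) := by
    intro x y
    rw [dist_eq_norm, ← real_inner_self_eq_norm_sq]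
  have hd : dist P S = ‖P - S‖ := dist_eq_norm P S
  have hd2 : dist Q R = ‖Q - R‖ := dist_eq_norm Q R
  simp only [e, midpoint_eq_smul_add, smul_add, inner_sub_sub_self, inner_sub_left,
    inner_sub_right, inner_add_left, inner_add_right, real_inner_smul_left,
    real_inner_smul_right, hd, hd2, invOf_eq_inv]
  have hn : ‖Q - R‖ ^ 2 = (inner ℝ (Q - R) (Q - R) : ℝ) := (real_inner_self_eq_norm_sq _).symm
  simp only [inner_sub_left, inner_sub_right] at hn h
  nlinarith [real_inner_comm P Q, real_inner_comm P R, real_inner_comm P S,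
    real_inner_comm Q R, real_inner_comm Q S, real_inner_comm R S, norm_nonneg (Q - R)]
end
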